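/- Let ρ(x) = P(x)/(1 + |A(x)|) be a safe Padé Activation Unit with P(x) = ∑_{j=0}^{m} a_j x^j not identically zero and A(x) = ∑_{k=1}^{n} b_k x^k, and suppose there exist x₁, x₂ ∈ ℝ with A(x₁) > 0 and A(x₂) < 0. Let d ∈ ℕ and let K ⊆ ℝ^d be a compact infinite set. Then the set of one-hidden-layer networks x ↦ ∑_{i=1}^{N} c_i · ρ(⟨w_i, x⟩ + θ_i) (with N ∈ ℕ, c_i, θ_i ∈ ℝ, w_i ∈ ℝ^d) is dense in C(K, ℝ) with the uniform norm. -/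

import Mathlib

/-- Numerator polynomial `P(x) = ∑_{j=0}^m a_j x^j`. -/
noncomputable def padeP (a : ℕ → ℝ) (m : ℕ) (x : ℝ) : ℝ :=
  ∑ j ∈ Finset.range (m + 1), a j * x ^ j

/-- `A(x) = ∑_{k=1}^n b_k x^k`. -/
noncomputable def padeA (b : ℕ → ℝ) (n : ℕ) (x : ℝ) : ℝ :=
  ∑ k ∈ Finset.Icc 1 n, b k * x ^ k

/-- Safe denominator `Q(x) = 1 + |A(x)|`. -/
noncomputable def padeQ (b : ℕ → ℝ) (n : ℕ) (x : ℝ) : ℝ :=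
  1 + |padeA b n x|

/-- The safe Padé Activation Unit `F(x) = P(x)/Q(x)`. -/
noncomputable def safePAU (a b : ℕ → ℝ) (m n : ℕ) (x : ℝ) : ℝ :=
  padeP a m x / padeQ b n x

open scoped RealInnerProductSpace

namespace PAUaux

open Finset Polynomial

def NA (ρ g : ℝ → ℝ) : Prop :=
  ∀ R : ℝ, 0 < R → ∀ ε : ℝ, 0 < ε → ∃ (N : ℕ) (c l θ : Fin N → ℝ),
    ∀ t : ℝ, |t| ≤ R → |g t - ∑ i, c i * ρ (l i * t + θ i)| ≤ ε

variable {ρ g g₁ g₂ : ℝ → ℝ}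

lemma NA.congr (h : NA ρ g₁) (he : ∀ t, g₁ t = g₂ t) : NA ρ g₂ := by
  have : g₁ = g₂ := funext he
  rwa [this] at h

lemma NA.base (ρ : ℝ → ℝ) (l θ : ℝ) : NA ρ (fun t => ρ (l * t + θ)) := by
  intro R _ ε hε
  refine ⟨1, fun _ => 1, fun _ => l, fun _ => θ, fun t _ => ?_⟩
  simpa using hε.le

lemma NA.zero (ρ : ℝ → ℝ) : NA ρ (fun _ => 0) := by
  intro R _ ε hε
  exact ⟨0, Fin.elim0, Fin.elim0, Fin.elim0, fun t _ => by simpa using hε.le⟩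

lemma NA.add (h₁ : NA ρ g₁) (h₂ : NA ρ g₂) : NA ρ (fun t => g₁ t + g₂ t) := by
  intro R hR ε hε
  obtain ⟨N₁, c₁, l₁, θ₁, hb₁⟩ := h₁ R hR (ε/2) (by positivity)
  obtain ⟨N₂, c₂, l₂, θ₂, hb₂⟩ := h₂ R hR (ε/2) (by positivity)
  refine ⟨N₁ + N₂, Fin.append c₁ c₂, Fin.append l₁ l₂, Fin.append θ₁ θ₂, fun t ht => ?_⟩
  have hsum : ∑ i : Fin (N₁ + N₂), Fin.append c₁ c₂ i * ρ (Fin.append l₁ l₂ i * t + Fin.append θ₁ θ₂ i)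
      = (∑ i : Fin N₁, c₁ i * ρ (l₁ i * t + θ₁ i)) + ∑ i : Fin N₂, c₂ i * ρ (l₂ i * t + θ₂ i) := by
    rw [Fin.sum_univ_add]
    simp
  rw [hsum]
  have := abs_add_le (g₁ t - ∑ i : Fin N₁, c₁ i * ρ (l₁ i * t + θ₁ i))
    (g₂ t - ∑ i : Fin N₂, c₂ i * ρ (l₂ i * t + θ₂ i))
  have e1 := hb₁ t ht
  have e2 := hb₂ t ht
  calc |g₁ t + g₂ t - ((∑ i : Fin N₁, c₁ i * ρ (l₁ i * t + θ₁ i)) + ∑ i : Fin N₂, c₂ i * ρ (l₂ i * t + θ₂ i))|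
      = |(g₁ t - ∑ i : Fin N₁, c₁ i * ρ (l₁ i * t + θ₁ i)) + (g₂ t - ∑ i : Fin N₂, c₂ i * ρ (l₂ i * t + θ₂ i))| := by
        congr 1; ring
    _ ≤ _ := this
    _ ≤ ε/2 + ε/2 := add_le_add e1 e2
    _ = ε := by ring

lemma NA.smul (c : ℝ) (h : NA ρ g) : NA ρ (fun t => c * g t) := by
  intro R hR ε hε
  obtain ⟨N, cc, l, θ, hb⟩ := h R hR (ε / (|c| + 1)) (by positivity)
  refine ⟨N, fun i => c * cc i, l, θ, fun t ht => ?_⟩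
  have : c * g t - ∑ i, (c * cc i) * ρ (l i * t + θ i)
      = c * (g t - ∑ i, cc i * ρ (l i * t + θ i)) := by
    rw [mul_sub, Finset.mul_sum]; simp only [mul_assoc]
  rw [this, abs_mul]
  calc |c| * |g t - ∑ i, cc i * ρ (l i * t + θ i)| ≤ |c| * (ε / (|c| + 1)) :=
        mul_le_mul_of_nonneg_left (hb t ht) (abs_nonneg c)
    _ ≤ ε := by
        rw [div_eq_inv_mul, ← mul_assoc]
        have h1 : |c| * (|c| + 1)⁻¹ ≤ 1 := by
          rw [mul_inv_le_iff₀ (by positivity)]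
          linarith [abs_nonneg c]
        nlinarith [abs_nonneg c, hε.le]

lemma NA.affine (α β : ℝ) (h : NA ρ g) : NA ρ (fun t => g (α * t + β)) := by
  intro R hR ε hε
  obtain ⟨N, c, l, θ, hb⟩ := h (|α| * R + |β| + 1) (by positivity) ε hε
  refine ⟨N, c, fun i => l i * α, fun i => l i * β + θ i, fun t ht => ?_⟩
  have harg : ∀ i : Fin N, l i * α * t + (l i * β + θ i) = l i * (α * t + β) + θ i := by
    intro i; ring
  have hb' := hb (α * t + β) ?_
  · simpa only [harg] using hb'
  · calc |α * t + β| ≤ |α * t| + |β| := abs_add_le _ _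
      _ = |α| * |t| + |β| := by rw [abs_mul]
      _ ≤ |α| * R + |β| + 1 := by nlinarith [abs_nonneg α, abs_nonneg β, abs_nonneg t]

lemma NA.sub (h₁ : NA ρ g₁) (h₂ : NA ρ g₂) : NA ρ (fun t => g₁ t - g₂ t) := by
  have := h₁.add (h₂.smul (-1))
  exact this.congr (fun t => by ring)

lemma NA.of_close (g : ℝ → ℝ)
    (h : ∀ R : ℝ, 0 < R → ∀ ε : ℝ, 0 < ε → ∃ g', NA ρ g' ∧ ∀ t, |t| ≤ R → |g t - g' t| ≤ ε) :
    NA ρ g := by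
  intro R hR ε hε
  obtain ⟨g', hg', hclose⟩ := h R hR (ε/2) (by positivity)
  obtain ⟨N, c, l, θ, hb⟩ := hg' R hR (ε/2) (by positivity)
  refine ⟨N, c, l, θ, fun t ht => ?_⟩
  calc |g t - ∑ i, c i * ρ (l i * t + θ i)|
      = |(g t - g' t) + (g' t - ∑ i, c i * ρ (l i * t + θ i))| := by rw [sub_add_sub_cancel]
    _ ≤ |g t - g' t| + |g' t - ∑ i, c i * ρ (l i * t + θ i)| := abs_add_le _ _
    _ ≤ ε/2 + ε/2 := add_le_add (hclose t ht) (hb t ht)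
    _ = ε := by ring

lemma NA.finsetSum {ι : Type*} (s : Finset ι) (f : ι → ℝ → ℝ)
    (h : ∀ i ∈ s, NA ρ (f i)) : NA ρ (fun t => ∑ i ∈ s, f i t) := by
  classical
  induction s using Finset.induction_on with
  | empty => exact (NA.zero ρ).congr (by simp)
  | insert a s' hx ih =>
    have h1 : NA ρ (f a) := h a (Finset.mem_insert_self a s')
    have h2 : NA ρ (fun t => ∑ i ∈ s', f i t) := ih fun i hi => h i (Finset.mem_insert_of_mem hi)
    exact (h1.add h2).congr (fun t => by rw [Finset.sum_insert hx])

/-! ### forward differences -/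

noncomputable def fD (f : ℝ → ℝ) : ℝ → ℝ := fun t => f (t + 1) - f t

lemma fD_iter_congr : ∀ {k : ℕ} {f g : ℝ → ℝ} {s : ℝ},
    (∀ u, s ≤ u → u ≤ s + k → f u = g u) → fD^[k] f s = fD^[k] g s := by
  intro k
  induction k with
  | zero => intro f g s h; simpa using h s le_rfl (by simp)
  | succ k ih =>
    intro f g s h
    rw [Function.iterate_succ_apply, Function.iterate_succ_apply]
    refine ih fun u hu hu' => ?_
    unfold fD
    have hc : (k+1 : ℕ) = (k : ℝ) + 1 := by push_cast; ring
    rw [h u (by linarith) (by rw [hc]; linarith), h (u+1) (by linarith) (by rw [hc]; linarith)]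

lemma fD_iter_abs_le : ∀ {k : ℕ} {f : ℝ → ℝ} {s M : ℝ}, 0 ≤ M →
    (∀ u, s ≤ u → u ≤ s + k → |f u| ≤ M) → |fD^[k] f s| ≤ 2 ^ k * M := by
  intro k
  induction k with
  | zero => intro f s M hM h; simpa using h s le_rfl (by simp)
  | succ k ih =>
    intro f s M hM h
    rw [Function.iterate_succ_apply]
    have hc : ((k+1 : ℕ) : ℝ) = (k : ℝ) + 1 := by push_cast; ring
    have hstep : ∀ u, s ≤ u → u ≤ s + k → |fD f u| ≤ 2 * M := by
      intro u hu hu'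
      unfold fD
      calc |f (u+1) - f u| ≤ |f (u+1)| + |f u| := abs_sub _ _
        _ ≤ M + M := add_le_add (h (u+1) (by linarith) (by rw [hc]; linarith))
            (h u hu (by rw [hc]; linarith))
        _ = 2 * M := by ring
    calc |fD^[k] (fD f) s| ≤ 2 ^ k * (2 * M) := ih (by linarith) hstep
      _ = 2 ^ (k+1) * M := by ring

lemma fD_iter_add : ∀ (k : ℕ) (f g : ℝ → ℝ) (s : ℝ),
    fD^[k] (fun t => f t + g t) s = fD^[k] f s + fD^[k] g s := by
  intro k
  induction k with
  | zero => intro f g s; simp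
  | succ k ih =>
    intro f g s
    rw [Function.iterate_succ_apply, Function.iterate_succ_apply, Function.iterate_succ_apply]
    have : fD (fun t => f t + g t) = fun t => fD f t + fD g t := by
      funext t; unfold fD; ring
    rw [this]
    exact ih _ _ _

lemma fD_iter_smul : ∀ (k : ℕ) (c : ℝ) (f : ℝ → ℝ) (s : ℝ),
    fD^[k] (fun t => c * f t) s = c * fD^[k] f s := by
  intro k
  induction k with
  | zero => intro c f s; simp
  | succ k ih =>
    intro c f s
    rw [Function.iterate_succ_apply, Function.iterate_succ_apply]
    have : fD (fun t => c * f t) = fun t => c * fD f t := by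
      funext t; unfold fD; ring
    rw [this]
    exact ih _ _ _

lemma fD_iter_zero_fun (k : ℕ) : fD^[k] (fun _ => (0:ℝ)) = fun _ => (0:ℝ) := by
  apply Function.iterate_fixed
  funext t; unfold fD; ring

lemma degree_step (p : ℝ[X]) (k : ℕ) (h : p.degree < ((k + 1 : ℕ) : WithBot ℕ)) :
    (p.comp (X + 1) - p).degree < ((k : ℕ) : WithBot ℕ) := by
  by_cases h0 : p.comp (X + 1) - p = 0
  · rw [h0, Polynomial.degree_zero]
    exact WithBot.bot_lt_coe k
  have hp : p ≠ 0 := by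
    intro hp0
    apply h0
    rw [hp0]; simp
  have hnd : p.natDegree ≠ 0 := by
    intro hnd
    apply h0
    rw [Polynomial.eq_C_of_natDegree_eq_zero hnd]
    simp
  have hX1 : (X + 1 : ℝ[X]) = X + C 1 := by rw [Polynomial.C_1]
  have hqnd : (X + 1 : ℝ[X]).natDegree = 1 := by rw [hX1]; exact Polynomial.natDegree_X_add_C 1
  have hcomp_nd : (p.comp (X + 1)).natDegree = p.natDegree := by
    rw [Polynomial.natDegree_comp, hqnd, mul_one]
  have hlcq : (X + 1 : ℝ[X]).leadingCoeff = 1 := by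
    rw [hX1]; exact (Polynomial.monic_X_add_C 1).leadingCoeff
  have hlc : (p.comp (X + 1)).leadingCoeff = p.leadingCoeff := by
    rw [Polynomial.leadingCoeff_comp (by rw [hqnd]; norm_num), hlcq, one_pow, mul_one]
  have hcomp0 : p.comp (X + 1) ≠ 0 := by
    intro hc
    apply hp
    rw [← Polynomial.leadingCoeff_eq_zero, ← hlc, hc, Polynomial.leadingCoeff_zero]
  have hdeg : (p.comp (X + 1)).degree = p.degree := by
    rw [Polynomial.degree_eq_natDegree hcomp0, Polynomial.degree_eq_natDegree hp, hcomp_nd]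
  have hlt : (p.comp (X + 1) - p).degree < p.degree := by
    have := Polynomial.degree_sub_lt hdeg hcomp0 hlc
    rwa [hdeg] at this
  have hple : p.degree ≤ ((k : ℕ) : WithBot ℕ) := by
    rw [Polynomial.degree_eq_natDegree hp] at h ⊢
    have : p.natDegree < k + 1 := by exact_mod_cast h
    exact_mod_cast Nat.lt_succ_iff.mp this
  exact lt_of_lt_of_le hlt hple

lemma fD_iter_poly : ∀ (k : ℕ) (p : ℝ[X]), p.degree < ((k : ℕ) : WithBot ℕ) → ∀ (t : ℝ),
    fD^[k] (fun t => p.eval t) t = 0 := by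
  intro k
  induction k with
  | zero =>
    intro p h t
    have hp0 : p = 0 := by
      rw [← Polynomial.degree_eq_bot]
      exact Nat.WithBot.lt_zero_iff.mp (by exact_mod_cast h)
    simp [hp0]
  | succ k ih =>
    intro p h t
    rw [Function.iterate_succ_apply]
    have heq : fD (fun t => p.eval t) = fun t => (p.comp (X + 1) - p).eval t := by
      funext u
      unfold fD
      simp [Polynomial.eval_comp]
    rw [heq]
    exact ih _ (degree_step p k h) t

lemma fD_iter_isolated : ∀ (k : ℕ) (e : ℝ → ℝ) (t : ℝ),
    (∀ i : ℕ, 1 ≤ i → i ≤ k → e (t + i) = 0) → fD^[k] e t = (-1) ^ k * e t := by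
  intro k
  induction k with
  | zero => intro e t _; simp
  | succ k ih =>
    intro e t h
    rw [Function.iterate_succ_apply]
    have h' : ∀ i : ℕ, 1 ≤ i → i ≤ k → fD e (t + i) = 0 := by
      intro i h1 h2
      unfold fD
      have e1 : e (t + i + 1) = 0 := by
        have := h (i+1) (by omega) (by omega)
        have hc : t + ((i+1 : ℕ) : ℝ) = t + i + 1 := by push_cast; ring
        rwa [hc] at this
      have e2 : e (t + i) = 0 := h i h1 (by omega)
      rw [e1, e2]; ring
    rw [ih (fD e) t h']
    unfold fD
    have e1 : e (t + 1) = 0 := by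
      have := h 1 le_rfl (by omega)
      have hc : t + ((1 : ℕ) : ℝ) = t + 1 := by push_cast; ring
      rwa [hc] at this
    rw [e1]
    ring

lemma NA.fDiff (h : NA ρ g) : NA ρ (PAUaux.fD g) := by
  have h1 := (h.affine 1 1).add ((h.affine 1 0).smul (-1))
  exact h1.congr (fun t => by unfold PAUaux.fD; simp; ring)

lemma NA.fD_iter (k : ℕ) (h : NA ρ g) : NA ρ (fD^[k] g) := by
  induction k with
  | zero => simpa using h
  | succ k ih =>
    rw [Function.iterate_succ_apply']
    exact ih.fDiff

lemma fD_iter_continuous {f : ℝ → ℝ} (k : ℕ) (hf : Continuous f) :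
    Continuous (fD^[k] f) := by
  induction k with
  | zero => simpa using hf
  | succ k ih =>
    rw [Function.iterate_succ_apply']
    exact (ih.comp (continuous_id.add continuous_const)).sub ih

/-! ### the spline function -/

noncomputable def rp (j : ℕ) (t : ℝ) : ℝ := (max t 0) ^ j

noncomputable def Hf (k j : ℕ) : ℝ → ℝ := fD^[k] (rp j)

lemma rp_continuous (j : ℕ) : Continuous (rp j) :=
  (continuous_id.max continuous_const).pow j

lemma Hf_continuous (k j : ℕ) : Continuous (Hf k j) :=
  fD_iter_continuous k (rp_continuous j)

lemma Hf_zero_of_nonneg (k j : ℕ) (hjk : j < k) (t : ℝ) (ht : 0 ≤ t) : Hf k j t = 0 := by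
  unfold Hf
  have hcongr : fD^[k] (rp j) t = fD^[k] (fun u => (X ^ j : ℝ[X]).eval u) t := by
    apply fD_iter_congr
    intro u hu _
    unfold rp
    rw [max_eq_left (le_trans ht hu)]
    simp
  rw [hcongr]
  apply fD_iter_poly
  rw [Polynomial.degree_X_pow]
  exact_mod_cast hjk

lemma Hf_zero_of_le (k j : ℕ) (hj : 1 ≤ j) (t : ℝ) (ht : t ≤ -(k : ℝ)) : Hf k j t = 0 := by
  unfold Hf
  have hcongr : fD^[k] (rp j) t = fD^[k] (fun _ => (0:ℝ)) t := by
    apply fD_iter_congr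
    intro u hu hu'
    unfold rp
    have : max u 0 = 0 := max_eq_right (by linarith)
    rw [this]
    exact zero_pow (by omega)
  rw [hcongr, fD_iter_zero_fun]

lemma Hf_half (k j : ℕ) (hj : 1 ≤ j) (hjk : j < k) :
    Hf k j (-(1/2)) = (-1) ^ (k + 1) * (-(1/2 : ℝ)) ^ j := by
  unfold Hf
  set e : ℝ → ℝ := fun t => rp j t - t ^ j with he
  have hsplit : rp j = fun t => (fun u => (X ^ j : ℝ[X]).eval u) t + e t := by
    funext t; simp [he]
  rw [hsplit, fD_iter_add]
  rw [fD_iter_poly k (X ^ j) (by rw [Polynomial.degree_X_pow]; exact_mod_cast hjk)]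
  rw [fD_iter_isolated k e (-(1/2)) ?_]
  · have : e (-(1/2)) = -(-(1/2 : ℝ)) ^ j := by
      simp only [he]
      unfold rp
      have h0 : max (-(1/2 : ℝ)) 0 = 0 := max_eq_right (by norm_num)
      rw [h0, zero_pow (by omega)]
      ring
    rw [this]
    ring
  · intro i h1 _
    simp only [he]
    unfold rp
    have hpos : (0:ℝ) ≤ -(1/2) + i := by
      have : (1:ℝ) ≤ i := by exact_mod_cast h1
      linarith
    rw [max_eq_left hpos]
    ring

/-! ### sign-change point of a polynomial -/

lemma crossing_core (p : ℝ[X]) (u v : ℝ) (huv : u < v)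
    (hu : p.eval u < 0) (hv : 0 < p.eval v) :
    ∃ x₀ δ : ℝ, 0 < δ ∧ p.eval x₀ = 0 ∧
      (∀ y ∈ Set.Ioo (x₀ - δ) x₀, p.eval y < 0) ∧
      (∀ y ∈ Set.Ioo x₀ (x₀ + δ), 0 < p.eval y) := by
  have hp : p ≠ 0 := by
    intro h0; rw [h0] at hv; simp at hv
  set S : Set ℝ := {x ∈ Set.Icc u v | p.eval x < 0} with hS
  have hSne : S.Nonempty := ⟨u, ⟨le_rfl, huv.le⟩, hu⟩
  have hSbdd : BddAbove S := ⟨v, fun x hx => hx.1.2⟩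
  set x₀ := sSup S with hx₀
  have hx₀mem : u ≤ x₀ := le_csSup hSbdd ⟨⟨le_rfl, huv.le⟩, hu⟩
  have hx₀le : x₀ ≤ v := csSup_le hSne fun x hx => hx.1.2
  have hcont : Continuous fun y => p.eval y := p.continuous
  have hx₀ev : p.eval x₀ ≤ 0 := by
    have hclosed : IsClosed {x : ℝ | p.eval x ≤ 0} := isClosed_le hcont continuous_const
    have hsub : S ⊆ {x : ℝ | p.eval x ≤ 0} := fun x hx => hx.2.le
    have : x₀ ∈ closure S := (isLUB_csSup hSne hSbdd).mem_closure hSne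
    exact (hclosed.closure_subset_iff.mpr hsub) this
  have hx₀v : x₀ < v := lt_of_le_of_ne hx₀le (by intro h; rw [h] at hx₀ev; linarith)
  -- roots are finite; find a punctured neighborhood with no roots other than x₀
  have hroots : Set.Finite {x : ℝ | p.IsRoot x} := Polynomial.finite_setOf_isRoot hp
  have hclosed' : IsClosed ({x : ℝ | p.IsRoot x} \ {x₀}) :=
    (hroots.subset Set.diff_subset).isClosed
  have hx₀not : x₀ ∉ {x : ℝ | p.IsRoot x} \ {x₀} := fun h => h.2 rfl
  obtain ⟨δa, hδa, hball⟩ := Metric.isOpen_iff.mp hclosed'.isOpen_compl x₀ hx₀not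
  set δ := min δa (v - x₀) with hδ
  have hδpos : 0 < δ := lt_min hδa (by linarith)
  have hnoroot : ∀ y : ℝ, |y - x₀| < δ → y ≠ x₀ → p.eval y ≠ 0 := by
    intro y hy hyne hev
    have : y ∈ Metric.ball x₀ δa := by
      rw [Metric.mem_ball, Real.dist_eq]
      exact lt_of_lt_of_le hy (min_le_left _ _)
    exact (hball this) ⟨hev, hyne⟩
  have hright : ∀ y ∈ Set.Ioo x₀ (x₀ + δ), 0 < p.eval y := by
    intro y hy
    have hyv : y < v := by
      have := hy.2
      have : y < x₀ + (v - x₀) := lt_of_lt_of_le this (by rw [hδ]; exact add_le_add le_rfl (min_le_right _ _))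
      linarith
    have hynotS : y ∉ S := fun hmem => absurd (le_csSup hSbdd hmem) (not_le.mpr hy.1)
    have hyIcc : y ∈ Set.Icc u v := ⟨le_trans hx₀mem hy.1.le, hyv.le⟩
    have hynonneg : 0 ≤ p.eval y := by
      by_contra hneg
      exact hynotS ⟨hyIcc, not_le.mp hneg⟩
    have hne := hnoroot y (by rw [abs_of_pos (by linarith [hy.1])]; linarith [hy.2]) (ne_of_gt hy.1)
    exact lt_of_le_of_ne hynonneg (Ne.symm hne)
  have hx₀root : p.eval x₀ = 0 := by
    by_contra hne
    have hneg : p.eval x₀ < 0 := lt_of_le_of_ne hx₀ev hne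
    have : ∀ᶠ y in nhds x₀, p.eval y < 0 := by
      have := hcont.continuousAt (x := x₀)
      exact this.eventually_lt continuousAt_const hneg
    obtain ⟨η, hη, hsmall⟩ := Metric.eventually_nhds_iff.mp this
    set y := x₀ + min η δ / 2 with hy
    have hylt : p.eval y < 0 := by
      apply hsmall
      rw [Real.dist_eq, hy]
      have : |min η δ / 2| = min η δ / 2 := abs_of_pos (by positivity)
      simp only [add_sub_cancel_left]
      rw [this]
      calc min η δ / 2 ≤ η / 2 := by gcongr; exact min_le_left _ _
        _ < η := by linarith
    have hypos : 0 < p.eval y := by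
      apply hright
      constructor
      · rw [hy]; have : 0 < min η δ / 2 := by positivity
        linarith
      · rw [hy]
        have : min η δ / 2 < δ := by
          have h1 : min η δ ≤ δ := min_le_right _ _
          linarith [hδpos]
        linarith
    linarith
  refine ⟨x₀, δ, hδpos, hx₀root, ?_, hright⟩
  intro y hy
  by_contra hnonneg
  push_neg at hnonneg
  have hyne : y ≠ x₀ := ne_of_lt hy.2
  have hypos : 0 < p.eval y := by
    have := hnoroot y (by rw [abs_of_neg (by linarith [hy.2])]; linarith [hy.1]) hyne
    exact lt_of_le_of_ne hnonneg (Ne.symm this)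
  -- find s ∈ S with y < s ≤ x₀, p.eval s < 0, then IVT gives a root in (y,s)
  obtain ⟨s, hsS, hys⟩ := exists_lt_of_lt_csSup hSne hy.2
  have hsx₀ : s ≤ x₀ := le_csSup hSbdd hsS
  have hsneg : p.eval s < 0 := hsS.2
  have hcont' : ContinuousOn (fun y => p.eval y) (Set.Icc y s) := hcont.continuousOn
  have : (0:ℝ) ∈ Set.Ioo (p.eval s) (p.eval y) := ⟨hsneg, hypos⟩
  obtain ⟨z, hz, hzroot⟩ := intermediate_value_Ioo' hys.le hcont' this
  have hzne : z ≠ x₀ := by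
    intro h
    rw [h] at hz
    exact absurd hz.2 (not_lt.mpr hsx₀)
  apply hnoroot z ?_ hzne hzroot
  have hz1 : x₀ - δ < z := by linarith [hz.1, hy.1]
  have hz2 : z < x₀ := lt_of_lt_of_le hz.2 hsx₀
  rw [abs_of_neg (by linarith)]
  linarith

lemma exists_crossing (p : ℝ[X]) (x₁ x₂ : ℝ) (h₁ : 0 < p.eval x₁) (h₂ : p.eval x₂ < 0) :
    ∃ x₀ δ σ : ℝ, 0 < δ ∧ (σ = 1 ∨ σ = -1) ∧ p.eval x₀ = 0 ∧
      (∀ y ∈ Set.Ioo (x₀ - δ) x₀, σ * p.eval y < 0) ∧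
      (∀ y ∈ Set.Ioo x₀ (x₀ + δ), 0 < σ * p.eval y) ∧
      (∀ y : ℝ, |y - x₀| ≤ δ → |p.eval y| ≤ 1/2) := by
  have hmain : ∃ x₀ δ σ : ℝ, 0 < δ ∧ (σ = 1 ∨ σ = -1) ∧ p.eval x₀ = 0 ∧
      (∀ y ∈ Set.Ioo (x₀ - δ) x₀, σ * p.eval y < 0) ∧
      (∀ y ∈ Set.Ioo x₀ (x₀ + δ), 0 < σ * p.eval y) := by
    rcases lt_trichotomy x₂ x₁ with hlt | heq | hgt
    · obtain ⟨x₀, δ, hδ, hroot, hL, hR⟩ := crossing_core p x₂ x₁ hlt h₂ h₁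
      exact ⟨x₀, δ, 1, hδ, Or.inl rfl, hroot,
        fun y hy => by simpa using hL y hy, fun y hy => by simpa using hR y hy⟩
    · exfalso; rw [heq] at h₂; linarith
    · -- reflect: q(X) = p(-X)
      set q := p.comp (-X) with hq
      have hqe : ∀ y : ℝ, q.eval y = p.eval (-y) := by
        intro y; rw [hq]; simp [Polynomial.eval_comp]
      have hq₁ : q.eval (-x₂) < 0 := by rw [hqe]; simpa using h₂
      have hq₂ : 0 < q.eval (-x₁) := by rw [hqe]; simpa using h₁
      obtain ⟨z₀, δ, hδ, hroot, hL, hR⟩ := crossing_core q (-x₂) (-x₁) (by linarith) hq₁ hq₂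
      refine ⟨-z₀, δ, -1, hδ, Or.inr rfl, by rw [hqe] at hroot; simpa using hroot, ?_, ?_⟩
      · intro y hy
        have : -y ∈ Set.Ioo z₀ (z₀ + δ) := by
          constructor <;> [skip; skip] <;> cases hy with
          | intro h1 h2 => linarith
        have := hR (-y) this
        rw [hqe] at this
        simp only [neg_neg] at this
        nlinarith
      · intro y hy
        have : -y ∈ Set.Ioo (z₀ - δ) z₀ := by
          constructor <;> cases hy with
          | intro h1 h2 => linarith
        have := hL (-y) this
        rw [hqe] at this
        simp only [neg_neg] at this
        nlinarith
  obtain ⟨x₀, δ₀, σ, hδ₀, hσ, hroot, hL, hR⟩ := hmain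
  -- shrink so that |p.eval y| ≤ 1/2 near x₀
  have hcont : ContinuousAt (fun y => p.eval y) x₀ := p.continuous.continuousAt
  have : ∀ᶠ y in nhds x₀, |p.eval y| < 1/2 := by
    have h0 : |p.eval x₀| < 1/2 := by rw [hroot]; norm_num
    have := hcont.abs
    exact this.eventually_lt continuousAt_const h0
  obtain ⟨η, hη, hsmall⟩ := Metric.eventually_nhds_iff.mp this
  refine ⟨x₀, min δ₀ (η/2), σ, lt_min hδ₀ (by linarith), hσ, hroot, ?_, ?_, ?_⟩
  · intro y hy
    apply hL
    have hmin := min_le_left δ₀ (η/2)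
    exact ⟨by linarith [hy.1], hy.2⟩
  · intro y hy
    apply hR
    have hmin := min_le_left δ₀ (η/2)
    exact ⟨hy.1, by linarith [hy.2]⟩
  · intro y hy
    have : dist y x₀ < η := by
      rw [Real.dist_eq]
      calc |y - x₀| ≤ min δ₀ (η/2) := hy
        _ ≤ η/2 := min_le_right _ _
        _ < η := by linarith
    exact (hsmall this).le

/-! ### modular inverse decomposition -/

lemma mod_inverse (w : ℝ[X]) (x₀ : ℝ) (hw : w.eval x₀ = 1) (P : ℝ[X]) (k : ℕ) :
    ∃ T S : ℝ[X], P = T * w + (X - C x₀) ^ k * S := by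
  induction k with
  | zero => exact ⟨0, P, by simp⟩
  | succ k ih =>
    obtain ⟨T, S, h⟩ := ih
    set c := S.eval x₀ with hc
    have h1 : (X - C x₀) ∣ (S - C c) := by
      rw [Polynomial.dvd_iff_isRoot]
      simp [Polynomial.IsRoot, hc]
    obtain ⟨S₁, hS₁⟩ := h1
    have h2 : (X - C x₀) ∣ (C c * w - C c) := by
      rw [Polynomial.dvd_iff_isRoot]
      simp [Polynomial.IsRoot, hw]
    obtain ⟨w₁, hw₁⟩ := h2
    refine ⟨T + C c * (X - C x₀) ^ k, S₁ - w₁, ?_⟩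
    have hS : S = C c + (X - C x₀) * S₁ := by linear_combination hS₁
    calc P = T * w + (X - C x₀) ^ k * S := h
      _ = (T + C c * (X - C x₀) ^ k) * w + (X - C x₀) ^ (k+1) * (S₁ - w₁) := by
          rw [hS]
          linear_combination (-((X - C x₀ : ℝ[X]) ^ k)) * hw₁

lemma mod_inverse_deg (w : ℝ[X]) (x₀ : ℝ) (hw : w.eval x₀ = 1) (P : ℝ[X]) (k : ℕ) :
    ∃ T S : ℝ[X], P = T * w + (X - C x₀) ^ k * S ∧ T.degree < ((k : ℕ) : WithBot ℕ) := by
  obtain ⟨T, S, h⟩ := mod_inverse w x₀ hw P k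
  have hmonic : ((X - C x₀) ^ k : ℝ[X]).Monic := (Polynomial.monic_X_sub_C x₀).pow k
  refine ⟨T %ₘ ((X - C x₀) ^ k), S + (T /ₘ ((X - C x₀) ^ k)) * w, ?_, ?_⟩
  · have hdiv : T %ₘ ((X - C x₀) ^ k) + (X - C x₀) ^ k * (T /ₘ ((X - C x₀) ^ k)) = T :=
      Polynomial.modByMonic_add_div T _
    calc P = T * w + (X - C x₀) ^ k * S := h
      _ = _ := by linear_combination (w : ℝ[X]) * hdiv.symm
  · have := Polynomial.degree_modByMonic_lt T hmonic
    have hdeg : ((X - C x₀) ^ k : ℝ[X]).degree = (k : WithBot ℕ) := by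
      rw [Polynomial.degree_pow, Polynomial.degree_X_sub_C]
      simp
    rwa [hdeg] at this


section
open Polynomial intervalIntegral

lemma integral_sq_pos (k : ℕ) (hk : 1 ≤ k) (H : ℝ → ℝ) (hH : Continuous H)
    (hval : H (-(1/2)) ≠ 0) :
    0 < ∫ u in (-(k : ℝ))..0, H u ^ 2 := by
  have hk1 : (1:ℝ) ≤ (k:ℝ) := by exact_mod_cast hk
  set c := H (-(1/2)) ^ 2 / 2 with hc
  have hcpos : 0 < c := by positivity
  have hcont2 : Continuous fun u => H u ^ 2 := hH.pow 2
  have hev : ∀ᶠ u in nhds (-(1/2) : ℝ), c < H u ^ 2 := by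
    apply ContinuousAt.eventually_lt continuousAt_const (hcont2.continuousAt (x := (-(1/2) : ℝ)))
    show c < H (-(1/2)) ^ 2
    rw [hc]
    nlinarith [sq_nonneg (H (-(1/2))), hval, sq_abs (H (-(1/2))), abs_pos.mpr hval]
  obtain ⟨η₀, hη₀, hsmall⟩ := Metric.eventually_nhds_iff.mp hev
  set η := min (η₀/2) (1/4) with hη
  have hηpos : 0 < η := by
    apply lt_min (by linarith) (by norm_num)
  have hη14 : η ≤ 1/4 := min_le_right _ _
  have hηη₀ : η < η₀ := lt_of_le_of_lt (min_le_left _ _) (by linarith)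
  set a₁ : ℝ := -(1/2) - η with ha₁
  set a₂ : ℝ := -(1/2) + η with ha₂
  have h1 : -(k:ℝ) ≤ a₁ := by rw [ha₁]; linarith
  have h2 : a₁ ≤ a₂ := by rw [ha₁, ha₂]; linarith
  have h3 : a₂ ≤ 0 := by rw [ha₂]; linarith
  have hint : ∀ x y : ℝ, IntervalIntegrable (fun u => H u ^ 2) MeasureTheory.volume x y :=
    fun x y => hcont2.intervalIntegrable x y
  have hsplit : (∫ u in (-(k : ℝ))..0, H u ^ 2) =
      (∫ u in (-(k : ℝ))..a₁, H u ^ 2) + (∫ u in a₁..a₂, H u ^ 2) + (∫ u in a₂..0, H u ^ 2) := by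
    rw [integral_add_adjacent_intervals (hint _ _) (hint _ _),
      integral_add_adjacent_intervals (hint _ _) (hint _ _)]
  rw [hsplit]
  have hpos1 : 0 ≤ ∫ u in (-(k : ℝ))..a₁, H u ^ 2 :=
    integral_nonneg (by linarith) (fun u _ => sq_nonneg _)
  have hpos3 : 0 ≤ ∫ u in a₂..0, H u ^ 2 :=
    integral_nonneg h3 (fun u _ => sq_nonneg _)
  have hmid : c * (a₂ - a₁) ≤ ∫ u in a₁..a₂, H u ^ 2 := by
    have hconst : (∫ _ in a₁..a₂, c) = (a₂ - a₁) * c := by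
      rw [integral_const]; simp [smul_eq_mul]
    have hmono := integral_mono_on (μ := MeasureTheory.volume) h2
      ((continuous_const (y := c)).intervalIntegrable a₁ a₂) (hint a₁ a₂) ?_
    · rw [hconst] at hmono; linarith
    · intro u hu
      have : dist u (-(1/2):ℝ) < η₀ := by
        rw [Real.dist_eq, abs_lt]
        have h4 := hu.1
        have h5 := hu.2
        rw [ha₁] at h4; rw [ha₂] at h5
        constructor <;> linarith
      exact (hsmall this).le
  have hlen : 0 < a₂ - a₁ := by rw [ha₁, ha₂]; linarith
  nlinarith


lemma laplace_nonzero (k : ℕ) (hk : 1 ≤ k) (H : ℝ → ℝ) (hH : Continuous H)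
    (hval : H (-(1/2)) ≠ 0) :
    ∃ α : ℝ, α ≠ 0 ∧ (∫ u in (-(k : ℝ))..0, H u * Real.exp (α * u)) ≠ 0 := by
  by_contra hcon
  push_neg at hcon
  have hk1 : (1:ℝ) ≤ (k:ℝ) := by exact_mod_cast hk
  -- a bound for |H| on [-k,0]
  obtain ⟨MH, hMH⟩ := (isCompact_Icc (a := -(k:ℝ)) (b := 0)).exists_bound_of_continuousOn
    hH.continuousOn
  have hMH0 : 0 ≤ MH := le_trans (norm_nonneg _) (hMH 0 ⟨by linarith, le_rfl⟩)
  have hIint : ∀ α : ℝ, IntervalIntegrable (fun u => H u * Real.exp (α * u))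
      MeasureTheory.volume (-(k:ℝ)) 0 :=
    fun α => (hH.mul (Real.continuous_exp.comp (continuous_const.mul continuous_id))).intervalIntegrable _ _
  -- the transform vanishes also at 0
  have hI : ∀ α : ℝ, (∫ u in (-(k : ℝ))..0, H u * Real.exp (α * u)) = 0 := by
    intro α
    rcases eq_or_ne α 0 with rfl | hα
    · -- continuity at 0
      have key : ∀ ε : ℝ, 0 < ε → |∫ u in (-(k : ℝ))..0, H u * Real.exp (0 * u)| ≤ ε := by
        intro ε hε
        set α' := min (1/((k:ℝ)+1)) (ε / (2 * ((k:ℝ)+1) * ((k:ℝ)+1) * (MH+1))) with hα'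
        have hα'pos : 0 < α' := by
          apply lt_min (by positivity) (by positivity)
        have hzero := hcon α' (ne_of_gt hα'pos)
        have hsub : (∫ u in (-(k : ℝ))..0, H u * Real.exp (0 * u))
            = ∫ u in (-(k : ℝ))..0, (H u * Real.exp (0 * u) - H u * Real.exp (α' * u)) := by
          rw [integral_sub (hIint 0) (hIint α'), hzero, sub_zero]
        rw [hsub]
        have hbound : ∀ u ∈ Set.uIoc (-(k:ℝ)) 0,
            ‖H u * Real.exp (0 * u) - H u * Real.exp (α' * u)‖ ≤ MH * (2 * α' * ((k:ℝ)+1)) := by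
          intro u hu
          have huIcc : u ∈ Set.Icc (-(k:ℝ)) 0 := by
            have := Set.uIoc_of_le (by linarith : -(k:ℝ) ≤ 0)
            rw [this] at hu
            exact ⟨hu.1.le, hu.2⟩
          have hu1 : |u| ≤ (k:ℝ) := by
            rw [abs_le]; exact ⟨huIcc.1, le_trans huIcc.2 (by linarith)⟩
          have hexp : |Real.exp (α' * u) - 1| ≤ 2 * |α' * u| := by
            apply Real.abs_exp_sub_one_le
            rw [abs_mul, abs_of_pos hα'pos]
            calc α' * |u| ≤ (1/((k:ℝ)+1)) * (k:ℝ) := by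
                  apply mul_le_mul (min_le_left _ _) hu1 (abs_nonneg u) (by positivity)
              _ ≤ 1 := by rw [div_mul_eq_mul_div, one_mul, div_le_one (by linarith)]; linarith
          have : H u * Real.exp (0 * u) - H u * Real.exp (α' * u)
              = H u * (1 - Real.exp (α' * u)) := by rw [zero_mul, Real.exp_zero]; ring
          rw [this]
          rw [Real.norm_eq_abs, abs_mul]
          have h1 : |H u| ≤ MH := by
            have := hMH u huIcc; rwa [Real.norm_eq_abs] at this
          have h2 : |1 - Real.exp (α' * u)| ≤ 2 * α' * ((k:ℝ)+1) := by
            rw [abs_sub_comm]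
            calc |Real.exp (α' * u) - 1| ≤ 2 * |α' * u| := hexp
              _ = 2 * α' * |u| := by rw [abs_mul, abs_of_pos hα'pos]; ring
              _ ≤ 2 * α' * ((k:ℝ)+1) := by
                  apply mul_le_mul_of_nonneg_left (by linarith) (by positivity)
          exact mul_le_mul h1 h2 (abs_nonneg _) hMH0
        have := norm_integral_le_of_norm_le_const hbound
        rw [Real.norm_eq_abs] at this
        calc |∫ u in (-(k : ℝ))..0, (H u * Real.exp (0 * u) - H u * Real.exp (α' * u))|
            ≤ MH * (2 * α' * ((k:ℝ)+1)) * |0 - (-(k:ℝ))| := this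
          _ ≤ MH * (2 * α' * ((k:ℝ)+1)) * ((k:ℝ)+1) := by
              apply mul_le_mul_of_nonneg_left _ (by positivity)
              rw [sub_neg_eq_add, zero_add, abs_of_nonneg (by linarith)]
              linarith
          _ ≤ ε := by
              have hle : α' ≤ ε / (2 * ((k:ℝ)+1) * ((k:ℝ)+1) * (MH+1)) := min_le_right _ _
              have hpos : (0:ℝ) < 2 * ((k:ℝ)+1) * ((k:ℝ)+1) * (MH+1) := by positivity
              rw [le_div_iff₀ hpos] at hle
              nlinarith [hMH0, hα'pos.le]
      have h0 : |∫ u in (-(k : ℝ))..0, H u * Real.exp (0 * u)| = 0 := by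
        by_contra hne
        have hpos : 0 < |∫ u in (-(k : ℝ))..0, H u * Real.exp (0 * u)| :=
          lt_of_le_of_ne (abs_nonneg _) (Ne.symm hne)
        have := key (|∫ u in (-(k : ℝ))..0, H u * Real.exp (0 * u)| / 2) (by linarith)
        linarith
      exact abs_eq_zero.mp h0
    · exact hcon α hα
  -- Stone–Weierstrass pairing on C(Icc (-k) 0, ℝ)
  set X' := Set.Icc (-(k:ℝ)) 0 with hX'
  have hmem0 : (0:ℝ) ∈ X' := ⟨by linarith, le_rfl⟩
  set pr : ℝ → X' := fun u => ⟨max (-(k:ℝ)) (min u 0),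
    ⟨le_max_left _ _, max_le (by linarith) (min_le_right _ _)⟩⟩ with hpr
  have hprc : Continuous pr := by
    apply Continuous.subtype_mk
    exact continuous_const.max (continuous_id.min continuous_const)
  have hpr_eq : ∀ u : ℝ, u ∈ X' → ((pr u : X') : ℝ) = u := by
    intro u hu
    simp only [hpr]
    rw [min_eq_left hu.2, max_eq_right hu.1]
  set J : C(X', ℝ) → ℝ := fun f => ∫ u in (-(k:ℝ))..0, H u * f (pr u) with hJ
  have hJc : ∀ f : C(X', ℝ), Continuous fun u => H u * f (pr u) :=
    fun f => hH.mul (f.continuous.comp hprc)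
  have hJint : ∀ f : C(X', ℝ), IntervalIntegrable (fun u => H u * f (pr u))
      MeasureTheory.volume (-(k:ℝ)) 0 := fun f => (hJc f).intervalIntegrable _ _
  set Ex : ℝ → C(X', ℝ) := fun α => ⟨fun u => Real.exp (α * (u : ℝ)),
    Real.continuous_exp.comp (continuous_const.mul continuous_subtype_val)⟩ with hEx
  have hJEx : ∀ α : ℝ, J (Ex α) = 0 := by
    intro α
    have hcongr : Set.EqOn (fun u => H u * (Ex α) (pr u)) (fun u => H u * Real.exp (α * u))
        (Set.uIcc (-(k:ℝ)) 0) := by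
      intro u hu
      rw [Set.uIcc_of_le (by linarith : -(k:ℝ) ≤ 0)] at hu
      have h1 : H u * (Ex α) (pr u) = H u * Real.exp (α * ((pr u : X') : ℝ)) := rfl
      show H u * (Ex α) (pr u) = H u * Real.exp (α * u)
      rw [h1, hpr_eq u hu]
    show (∫ u in (-(k:ℝ))..0, H u * (Ex α) (pr u)) = 0
    rw [integral_congr hcongr]
    exact hI α
  have hJadd : ∀ f g : C(X', ℝ), J (f + g) = J f + J g := by
    intro f g
    show (∫ u in (-(k:ℝ))..0, H u * (f + g) (pr u))
        = (∫ u in (-(k:ℝ))..0, H u * f (pr u)) + ∫ u in (-(k:ℝ))..0, H u * g (pr u)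
    rw [← integral_add (hJint f) (hJint g)]
    congr 1
    funext u
    simp [ContinuousMap.add_apply]
    ring
  have hJsmul : ∀ (c : ℝ) (f : C(X', ℝ)), J (c • f) = c * J f := by
    intro c f
    show (∫ u in (-(k:ℝ))..0, H u * (c • f) (pr u))
        = c * ∫ u in (-(k:ℝ))..0, H u * f (pr u)
    rw [← integral_const_mul]
    congr 1
    funext u
    simp [ContinuousMap.smul_apply]
    ring
  -- the span of exponentials
  have hmonoid_one : (1 : C(X', ℝ)) ∈ Set.range Ex := by
    refine ⟨0, ?_⟩
    ext u
    simp [hEx]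
  have hmonoid_mul : ∀ f g : C(X', ℝ), f ∈ Set.range Ex → g ∈ Set.range Ex →
      f * g ∈ Set.range Ex := by
    rintro f g ⟨α, rfl⟩ ⟨β, rfl⟩
    refine ⟨α + β, ?_⟩
    ext u
    simp only [hEx, ContinuousMap.mul_apply, ContinuousMap.coe_mk]
    rw [← Real.exp_add]
    ring_nf
  set MM : Submonoid C(X', ℝ) :=
    { carrier := Set.range Ex
      one_mem' := hmonoid_one
      mul_mem' := fun hf hg => hmonoid_mul _ _ hf hg } with hMM
  set SA := Algebra.adjoin ℝ (Set.range Ex) with hSA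
  have hJspan : ∀ f ∈ Submodule.span ℝ (Set.range Ex), J f = 0 := by
    intro f hf
    induction hf using Submodule.span_induction with
    | mem g hg => obtain ⟨α, rfl⟩ := hg; exact hJEx α
    | zero =>
      have : (0 : C(X', ℝ)) = (0:ℝ) • (0 : C(X', ℝ)) := by simp
      rw [this, hJsmul]; ring
    | add g h _ _ ihg ihh => rw [hJadd]; rw [ihg, ihh]; ring
    | smul c g _ ihg => rw [hJsmul, ihg]; ring
  have hJSA : ∀ f ∈ SA, J f = 0 := by
    intro f hf
    have hmem : f ∈ Subalgebra.toSubmodule SA := hf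
    rw [hSA, Algebra.adjoin_eq_span] at hmem
    have hset : ((Submonoid.closure (Set.range Ex)) : Set C(X', ℝ)) = Set.range Ex := by
      rw [show (Set.range Ex) = (MM : Set C(X', ℝ)) from rfl, Submonoid.closure_eq]
    rw [hset] at hmem
    exact hJspan f hmem
  -- separates points
  have hsep : SA.SeparatesPoints := by
    intro x y hxy
    refine ⟨Ex 1, ⟨Ex 1, Algebra.subset_adjoin ⟨1, rfl⟩, rfl⟩, ?_⟩
    simp only [hEx, ContinuousMap.coe_mk, one_mul]
    intro h
    apply hxy
    exact Subtype.ext (Real.exp_injective h)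
  have htop := ContinuousMap.subalgebra_topologicalClosure_eq_top_of_separatesPoints SA hsep
  -- H as an element of C(X', ℝ)
  set HX : C(X', ℝ) := ⟨fun u => H (u : ℝ), hH.comp continuous_subtype_val⟩ with hHX
  have hHXmem : HX ∈ closure (SA : Set C(X', ℝ)) := by
    have : (SA.topologicalClosure : Set C(X', ℝ)) = closure (SA : Set C(X', ℝ)) :=
      Subalgebra.topologicalClosure_coe SA
    rw [← this, htop]
    trivial
  have hJHX : J HX = 0 := by
    have key : ∀ ε : ℝ, 0 < ε → |J HX| ≤ ε * (MH * ((k:ℝ)+1)) := by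
      intro ε hε
      obtain ⟨g, hgSA, hgdist⟩ := Metric.mem_closure_iff.mp hHXmem ε hε
      have hJg : J g = 0 := hJSA g hgSA
      have hdiff : J HX - J g = ∫ u in (-(k:ℝ))..0, H u * (HX (pr u) - g (pr u)) := by
        show ((∫ u in (-(k:ℝ))..0, H u * HX (pr u)) - ∫ u in (-(k:ℝ))..0, H u * g (pr u)) = _
        rw [← integral_sub (hJint HX) (hJint g)]
        congr 1
        funext u
        ring
      have hbound : ∀ u ∈ Set.uIoc (-(k:ℝ)) 0,
          ‖H u * (HX (pr u) - g (pr u))‖ ≤ MH * ε := by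
        intro u hu
        have huIcc : u ∈ Set.Icc (-(k:ℝ)) 0 := by
          have := Set.uIoc_of_le (by linarith : -(k:ℝ) ≤ 0)
          rw [this] at hu
          exact ⟨hu.1.le, hu.2⟩
        rw [Real.norm_eq_abs, abs_mul]
        have h1 : |H u| ≤ MH := by
          have := hMH u huIcc; rwa [Real.norm_eq_abs] at this
        have h2 : |HX (pr u) - g (pr u)| ≤ ε := by
          have := ContinuousMap.dist_apply_le_dist (f := HX) (g := g) (pr u)
          rw [Real.dist_eq] at this
          calc |HX (pr u) - g (pr u)| ≤ dist HX g := this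
            _ ≤ ε := hgdist.le
        exact mul_le_mul h1 h2 (abs_nonneg _) hMH0
      have hnorm := norm_integral_le_of_norm_le_const hbound
      rw [Real.norm_eq_abs] at hnorm
      calc |J HX| = |J HX - J g| := by rw [hJg, sub_zero]
        _ ≤ MH * ε * |0 - (-(k:ℝ))| := by rw [hdiff]; exact hnorm
        _ ≤ MH * ε * ((k:ℝ)+1) := by
            apply mul_le_mul_of_nonneg_left _ (by positivity)
            rw [sub_neg_eq_add, zero_add, abs_of_nonneg (by linarith)]
            linarith
        _ = ε * (MH * ((k:ℝ)+1)) := by ring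
    by_contra hne
    have hpos : 0 < |J HX| := lt_of_le_of_ne (abs_nonneg _) (Ne.symm (abs_ne_zero.mpr hne))
    rcases eq_or_lt_of_le hMH0 with hMHeq | hMHpos
    · -- MH = 0 forces H = 0 on the interval, contradiction handled via key with ε = 1
      have := key 1 one_pos
      rw [← hMHeq] at this
      simp at this
      exact hne this
    · have := key (|J HX| / (2 * (MH * ((k:ℝ)+1)))) (by positivity)
      have h2 : |J HX| / (2 * (MH * ((k:ℝ)+1))) * (MH * ((k:ℝ)+1)) = |J HX| / 2 := by
        field_simp
      rw [h2] at this
      linarith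
  -- but J HX is the positive integral of H²
  have hJHXpos : 0 < J HX := by
    have hcongr : Set.EqOn (fun u => H u * HX (pr u)) (fun u => H u ^ 2)
        (Set.uIcc (-(k:ℝ)) 0) := by
      intro u hu
      rw [Set.uIcc_of_le (by linarith : -(k:ℝ) ≤ 0)] at hu
      have h1 : H u * HX (pr u) = H u * H ((pr u : X') : ℝ) := rfl
      show H u * HX (pr u) = H u ^ 2
      rw [h1, hpr_eq u hu]
      ring
    show 0 < ∫ u in (-(k:ℝ))..0, H u * HX (pr u)
    rw [integral_congr hcongr]
    exact integral_sq_pos k hk H hH hval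
  linarith


lemma NA_exp_of_H (ρ : ℝ → ℝ) (k : ℕ) (hk : 1 ≤ k) (H : ℝ → ℝ) (hH : Continuous H)
    (hsupp0 : ∀ t : ℝ, 0 ≤ t → H t = 0) (hsuppk : ∀ t : ℝ, t ≤ -(k : ℝ) → H t = 0)
    (hval : H (-(1/2)) ≠ 0) (hNA : NA ρ H) :
    ∃ α : ℝ, α ≠ 0 ∧ NA ρ (fun t => Real.exp (α * t)) := by
  obtain ⟨α₀, hα₀, hM⟩ := laplace_nonzero k hk H hH hval
  set β := -α₀ with hβdef
  have hβ : β ≠ 0 := by rw [hβdef]; exact neg_ne_zero.mpr hα₀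
  set M := ∫ u in (-(k:ℝ))..0, H u * Real.exp (α₀ * u) with hMdef
  have hMne : M ≠ 0 := hM
  have hk1 : (1:ℝ) ≤ (k:ℝ) := by exact_mod_cast hk
  have hNAM : NA ρ (fun t => M * Real.exp (β * t)) := by
    apply NA.of_close
    intro R hR ε hε
    set L := 2 * R + (k:ℝ) with hLdef
    have hL : 0 < L := by rw [hLdef]; linarith
    set ε' := ε / (L + 1) with hε'def
    have hε' : 0 < ε' := by rw [hε'def]; positivity
    set Φ : ℝ × ℝ → ℝ := fun p => Real.exp (β * p.2) * H (p.1 - p.2) with hΦdef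
    have hΦc : Continuous Φ :=
      (Real.continuous_exp.comp (continuous_const.mul continuous_snd)).mul
        (hH.comp (continuous_fst.sub continuous_snd))
    set s : Set (ℝ × ℝ) := Set.Icc (-R) R ×ˢ Set.Icc (-R) (R + k) with hsdef
    have hs : IsCompact s := isCompact_Icc.prod isCompact_Icc
    have huc := hs.uniformContinuousOn_of_continuous hΦc.continuousOn
    rw [Metric.uniformContinuousOn_iff] at huc
    obtain ⟨δ, hδ, hucδ⟩ := huc ε' hε'
    obtain ⟨N, hN⟩ := exists_nat_gt (L / δ)
    have hNpos : (0:ℝ) < N := lt_trans (by positivity) hN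
    have hN0 : N ≠ 0 := by
      intro h; rw [h] at hNpos; simp at hNpos
    set Δ := L / N with hΔdef
    have hΔpos : 0 < Δ := by rw [hΔdef]; positivity
    have hΔδ : Δ < δ := by
      rw [hΔdef, div_lt_iff₀ hNpos]
      rw [div_lt_iff₀ hδ] at hN
      linarith
    set v : ℕ → ℝ := fun l => -R + l * Δ with hvdef
    have hv0 : v 0 = -R := by rw [hvdef]; simp
    have hvN : v N = R + k := by
      rw [hvdef]
      simp only
      rw [hΔdef]
      field_simp
      ring
    have hvstep : ∀ l : ℕ, v (l+1) - v l = Δ := by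
      intro l
      rw [hvdef]
      simp only
      push_cast
      ring
    have hvmono : ∀ l : ℕ, l ≤ N → v l ∈ Set.Icc (-R) (R + k) := by
      intro l hl
      constructor
      · rw [hvdef]
        simp only
        have : (0:ℝ) ≤ l * Δ := by positivity
        linarith
      · rw [hvdef]
        simp only
        have hcast : (l:ℝ) ≤ N := by exact_mod_cast hl
        have : (l:ℝ) * Δ ≤ N * Δ := mul_le_mul_of_nonneg_right hcast hΔpos.le
        have hNΔ : (N:ℝ) * Δ = L := by rw [hΔdef]; field_simp
        rw [hLdef] at hNΔ
        linarith
    set g' : ℝ → ℝ := fun t => ∑ l ∈ Finset.range N, (Δ * Real.exp (β * v l)) * H (t - v l)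
      with hg'def
    refine ⟨g', ?_, ?_⟩
    · apply NA.finsetSum
      intro l _
      have h1 := (hNA.affine 1 (-(v l))).smul (Δ * Real.exp (β * v l))
      exact h1.congr (fun t => by rw [one_mul, ← sub_eq_add_neg])
    · intro t ht
      rw [abs_le] at ht
      -- identify the integral
      set f : ℝ → ℝ := fun u => Real.exp (β * (t - u)) * H u with hfdef
      have hfc : Continuous f :=
        (Real.continuous_exp.comp (continuous_const.mul (continuous_const.sub continuous_id))).mul hH
      have hΦf : ∀ x : ℝ, Φ (t, x) = f (t - x) := by
        intro x
        show Real.exp (β * x) * H (t - x) = Real.exp (β * (t - (t - x))) * H (t - x)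
        rw [show t - (t - x) = x from by ring]
      have hΦtc : Continuous fun x => Φ (t, x) := hΦc.comp (continuous_const.prodMk continuous_id)
      have key1 : M * Real.exp (β * t) = ∫ x in (-R)..(R + (k:ℝ)), Φ (t, x) := by
        have e1 : (∫ x in (-R)..(R + (k:ℝ)), Φ (t, x)) = ∫ x in (-R)..(R + (k:ℝ)), f (t - x) := by
          apply integral_congr
          intro x _
          exact hΦf x
        rw [e1, integral_comp_sub_left f t]
        rw [show t - -R = t + R from by ring]
        have hint : ∀ x y : ℝ, IntervalIntegrable f MeasureTheory.volume x y :=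
          fun x y => hfc.intervalIntegrable x y
        have e2 : (∫ u in (t - (R + (k:ℝ)))..(t + R), f u)
            = (∫ u in (t - (R + (k:ℝ)))..(-(k:ℝ)), f u) + ((∫ u in (-(k:ℝ))..0, f u)
              + ∫ u in (0:ℝ)..(t + R), f u) := by
          rw [integral_add_adjacent_intervals (hint _ _) (hint _ _),
            integral_add_adjacent_intervals (hint _ _) (hint _ _)]
        have e3 : (∫ u in (t - (R + (k:ℝ)))..(-(k:ℝ)), f u) = 0 := by
          have : Set.EqOn f (fun _ => (0:ℝ)) (Set.uIcc (t - (R + (k:ℝ))) (-(k:ℝ))) := by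
            intro u hu
            rw [Set.uIcc_of_le (by linarith [ht.2] : t - (R + (k:ℝ)) ≤ -(k:ℝ))] at hu
            show Real.exp (β * (t - u)) * H u = 0
            rw [hsuppk u hu.2, mul_zero]
          rw [integral_congr this, integral_zero]
        have e4 : (∫ u in (0:ℝ)..(t + R), f u) = 0 := by
          have : Set.EqOn f (fun _ => (0:ℝ)) (Set.uIcc (0:ℝ) (t + R)) := by
            intro u hu
            rw [Set.uIcc_of_le (by linarith [ht.1] : (0:ℝ) ≤ t + R)] at hu
            show Real.exp (β * (t - u)) * H u = 0
            rw [hsupp0 u hu.1, mul_zero]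
          rw [integral_congr this, integral_zero]
        have e5 : (∫ u in (-(k:ℝ))..0, f u) = Real.exp (β * t) * M := by
          have : Set.EqOn f (fun u => Real.exp (β * t) * (H u * Real.exp (α₀ * u)))
              (Set.uIcc (-(k:ℝ)) 0) := by
            intro u _
            show Real.exp (β * (t - u)) * H u = Real.exp (β * t) * (H u * Real.exp (α₀ * u))
            rw [show β * (t - u) = β * t + α₀ * u from by rw [hβdef]; ring, Real.exp_add]
            ring
          rw [integral_congr this, integral_const_mul, hMdef]
        rw [e2, e3, e4, e5]
        ring
      -- Riemann sum comparison
      have hadj : ∑ l ∈ Finset.range N, (∫ x in (v l)..(v (l+1)), Φ (t, x))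
          = ∫ x in (v 0)..(v N), Φ (t, x) :=
        sum_integral_adjacent_intervals (fun i _ => hΦtc.intervalIntegrable _ _)
      have hcell : ∀ l ∈ Finset.range N,
          |(∫ x in (v l)..(v (l+1)), Φ (t, x)) - (Δ * Real.exp (β * v l)) * H (t - v l)| ≤ ε' * Δ := by
        intro l hl
        rw [Finset.mem_range] at hl
        have hconst : (Δ * Real.exp (β * v l)) * H (t - v l)
            = ∫ _ in (v l)..(v (l+1)), Φ (t, v l) := by
          rw [integral_const, hvstep l, smul_eq_mul]
          show Δ * Real.exp (β * v l) * H (t - v l) = Δ * (Real.exp (β * v l) * H (t - v l))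
          ring
        rw [hconst, ← integral_sub (hΦtc.intervalIntegrable _ _)
          ((continuous_const (y := Φ (t, v l))).intervalIntegrable _ _)]
        have hb : ∀ x ∈ Set.uIoc (v l) (v (l+1)), ‖Φ (t, x) - Φ (t, v l)‖ ≤ ε' := by
          intro x hx
          have hvl : v l ≤ v (l+1) := by linarith [hvstep l, hΔpos]
          rw [Set.uIoc_of_le hvl] at hx
          have hmem1 : (t, x) ∈ s := by
            rw [hsdef]
            constructor
            · exact ⟨ht.1, ht.2⟩
            · have h1 := (hvmono l hl.le).1
              have h2 := (hvmono (l+1) hl).2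
              exact ⟨le_trans h1 hx.1.le, le_trans hx.2 h2⟩
          have hmem2 : (t, v l) ∈ s := by
            rw [hsdef]
            exact ⟨⟨ht.1, ht.2⟩, hvmono l hl.le⟩
          have hdist : dist (t, x) (t, v l) < δ := by
            rw [Prod.dist_eq]
            apply max_lt (by rw [dist_self]; exact hδ)
            rw [Real.dist_eq]
            rw [abs_of_nonneg (by linarith [hx.1.le] : (0:ℝ) ≤ x - v l)]
            have := hvstep l
            have := hx.2
            linarith
          have := hucδ (t, x) hmem1 (t, v l) hmem2 hdist
          rw [Real.dist_eq] at this
          exact this.le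
        have := norm_integral_le_of_norm_le_const hb
        rw [Real.norm_eq_abs] at this
        calc |∫ x in (v l)..(v (l+1)), (Φ (t, x) - Φ (t, v l))| ≤ ε' * |v (l+1) - v l| := this
          _ = ε' * Δ := by rw [hvstep l, abs_of_pos hΔpos]
      have hfinal : |M * Real.exp (β * t) - g' t| ≤ ε' * L := by
        rw [key1, hg'def]
        have : (∫ x in (-R)..(R + (k:ℝ)), Φ (t, x))
            - ∑ l ∈ Finset.range N, (Δ * Real.exp (β * v l)) * H (t - v l)
            = ∑ l ∈ Finset.range N,
              ((∫ x in (v l)..(v (l+1)), Φ (t, x)) - (Δ * Real.exp (β * v l)) * H (t - v l)) := by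
          rw [Finset.sum_sub_distrib, hadj, hv0, hvN]
        rw [this]
        calc |∑ l ∈ Finset.range N,
              ((∫ x in (v l)..(v (l+1)), Φ (t, x)) - (Δ * Real.exp (β * v l)) * H (t - v l))|
            ≤ ∑ l ∈ Finset.range N,
              |(∫ x in (v l)..(v (l+1)), Φ (t, x)) - (Δ * Real.exp (β * v l)) * H (t - v l)| :=
              Finset.abs_sum_le_sum_abs _ _
          _ ≤ ∑ _l ∈ Finset.range N, ε' * Δ := Finset.sum_le_sum hcell
          _ = N * (ε' * Δ) := by rw [Finset.sum_const, Finset.card_range]; simp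
          _ = ε' * L := by rw [hΔdef]; field_simp
      calc |M * Real.exp (β * t) - g' t| ≤ ε' * L := hfinal
        _ ≤ ε := by
            rw [hε'def]
            rw [div_mul_eq_mul_div, div_le_iff₀ (by linarith)]
            nlinarith
  refine ⟨β, hβ, ?_⟩
  have hfin := hNAM.smul M⁻¹
  apply hfin.congr
  intro t
  field_simp

end
end PAUaux

/-! ### evaluation lemmas -/

noncomputable def pPoly (a : ℕ → ℝ) (m : ℕ) : Polynomial ℝ :=
  ∑ j ∈ Finset.range (m + 1), Polynomial.C (a j) * Polynomial.X ^ j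

noncomputable def aPoly (b : ℕ → ℝ) (n : ℕ) : Polynomial ℝ :=
  ∑ k ∈ Finset.Icc 1 n, Polynomial.C (b k) * Polynomial.X ^ k

lemma pPoly_eval (a : ℕ → ℝ) (m : ℕ) (x : ℝ) : (pPoly a m).eval x = padeP a m x := by
  unfold pPoly padeP
  rw [Polynomial.eval_finset_sum]
  simp

lemma aPoly_eval (b : ℕ → ℝ) (n : ℕ) (x : ℝ) : (aPoly b n).eval x = padeA b n x := by
  unfold aPoly padeA
  rw [Polynomial.eval_finset_sum]
  simp

lemma padeP_continuous (a : ℕ → ℝ) (m : ℕ) : Continuous (padeP a m) := by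
  have : padeP a m = fun x => (pPoly a m).eval x := funext fun x => (pPoly_eval a m x).symm
  rw [this]
  exact (pPoly a m).continuous

lemma padeA_continuous (b : ℕ → ℝ) (n : ℕ) : Continuous (padeA b n) := by
  have : padeA b n = fun x => (aPoly b n).eval x := funext fun x => (aPoly_eval b n x).symm
  rw [this]
  exact (aPoly b n).continuous

lemma padeQ_pos (b : ℕ → ℝ) (n : ℕ) (x : ℝ) : 0 < padeQ b n x := by
  unfold padeQ
  have := abs_nonneg (padeA b n x)
  linarith

lemma safePAU_continuous (a b : ℕ → ℝ) (m n : ℕ) : Continuous (safePAU a b m n) := by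
  unfold safePAU
  apply Continuous.div (padeP_continuous a m)
  · unfold padeQ
    exact continuous_const.add (padeA_continuous b n).abs
  · intro x
    exact (padeQ_pos b n x).ne'

set_option maxHeartbeats 2000000 in
/-- The core 1-D result: some nonzero multiple of a spline is approximable. -/
lemma NA_spline (m n : ℕ) (a b : ℕ → ℝ)
    (hP : ∃ x : ℝ, padeP a m x ≠ 0)
    (x₁ x₂ : ℝ) (h₁ : 0 < padeA b n x₁) (h₂ : padeA b n x₂ < 0) :
    ∃ (k j : ℕ) (c₀ : ℝ), 1 ≤ j ∧ j < k ∧ c₀ ≠ 0 ∧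
      PAUaux.NA (safePAU a b m n) (fun t => c₀ * PAUaux.Hf k j t) := by
  classical
  open PAUaux Polynomial in
  obtain ⟨xP, hxP⟩ := hP
  have hpPne : pPoly a m ≠ 0 := by
    intro h
    apply hxP
    rw [← pPoly_eval, h, Polynomial.eval_zero]
  have haPne : aPoly b n ≠ 0 := by
    intro h
    have := aPoly_eval b n x₁
    rw [h, Polynomial.eval_zero] at this
    rw [← this] at h₁
    exact lt_irrefl 0 h₁
  obtain ⟨x₀, δ₁, σ, hδ₁, hσ, hroot, hLn, hRn, hhalf⟩ :=
    PAUaux.exists_crossing (aPoly b n) x₁ x₂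
      (by rw [aPoly_eval]; exact h₁) (by rw [aPoly_eval]; exact h₂)
  have hA0 : padeA b n x₀ = 0 := by rw [← aPoly_eval]; exact hroot
  have hσ0 : σ ≠ 0 := by rcases hσ with h | h <;> rw [h] <;> norm_num
  have hσ1 : |σ| = 1 := by rcases hσ with h | h <;> rw [h] <;> norm_num
  -- the polynomial w = 1 - σ A
  set w : Polynomial ℝ := 1 - Polynomial.C σ * aPoly b n with hw
  have hweval : ∀ y : ℝ, w.eval y = 1 - σ * padeA b n y := by
    intro y; rw [hw]; simp [aPoly_eval]
  have hwx₀ : w.eval x₀ = 1 := by rw [hweval, hA0]; ring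
  -- ν and its factorization
  set ν : Polynomial ℝ := Polynomial.C (-2*σ) * (pPoly a m * aPoly b n) with hν
  have hνne : ν ≠ 0 := by
    rw [hν]
    apply mul_ne_zero
    · intro h
      rw [Polynomial.C_eq_zero] at h
      apply hσ0
      linarith [h]
    · exact mul_ne_zero hpPne haPne
  set j := Polynomial.rootMultiplicity x₀ ν with hjdef
  have hνroot : ν.IsRoot x₀ := by
    show ν.eval x₀ = 0
    rw [hν]
    simp [pPoly_eval, aPoly_eval, hA0]
  have hj1 : 1 ≤ j := (Polynomial.rootMultiplicity_pos hνne).mpr hνroot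
  set μ := ν /ₘ (Polynomial.X - Polynomial.C x₀) ^ j with hμdef
  have hfact : (Polynomial.X - Polynomial.C x₀) ^ j * μ = ν :=
    Polynomial.pow_mul_divByMonic_rootMultiplicity_eq ν x₀
  have hμx₀ : μ.eval x₀ ≠ 0 :=
    Polynomial.eval_divByMonic_pow_rootMultiplicity_ne_zero x₀ hνne
  set k := j + 1 with hkdef
  obtain ⟨T₀, S₀, hdecomp, hT₀deg⟩ := PAUaux.mod_inverse_deg w x₀ hwx₀ (pPoly a m) k
  set c₀ := μ.eval x₀ with hc₀def
  refine ⟨k, j, c₀, hj1, Nat.lt_succ_self j, hμx₀, ?_⟩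
  set ρ := safePAU a b m n with hρdef
  -- denominators
  have hden1 : ∀ y : ℝ, |y - x₀| ≤ δ₁ → (1:ℝ)/2 ≤ 1 - σ * padeA b n y := by
    intro y hy
    have h1 : |σ * padeA b n y| ≤ 1/2 := by
      rw [abs_mul, hσ1, one_mul, ← aPoly_eval]
      exact hhalf y hy
    rw [abs_le] at h1
    linarith [h1.2]
  have hden2 : ∀ y : ℝ, |y - x₀| ≤ δ₁ → (1:ℝ)/2 ≤ 1 + σ * padeA b n y := by
    intro y hy
    have h1 : |σ * padeA b n y| ≤ 1/2 := by
      rw [abs_mul, hσ1, one_mul, ← aPoly_eval]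
      exact hhalf y hy
    rw [abs_le] at h1
    linarith [h1.1]
  set gg : ℝ → ℝ := fun y => S₀.eval y / (1 - σ * padeA b n y) with hggdef
  set hh : ℝ → ℝ := fun y => μ.eval y / ((1 - σ * padeA b n y) * (1 + σ * padeA b n y))
    with hhhdef
  -- the pointwise identity
  have hkey : ∀ y : ℝ, |y - x₀| < δ₁ → ρ y =
      T₀.eval y + (y - x₀)^k * gg y + (if x₀ < y then (y - x₀)^j * hh y else 0) := by
    intro y hy
    have hd1 := hden1 y hy.le
    have hd2 := hden2 y hy.le
    have hd1ne : (1 - σ * padeA b n y) ≠ 0 := by linarith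
    have hd2ne : (1 + σ * padeA b n y) ≠ 0 := by linarith
    have hPdec : padeP a m y
        = T₀.eval y * (1 - σ * padeA b n y) + (y - x₀)^k * S₀.eval y := by
      have := congrArg (Polynomial.eval y) hdecomp
      simpa [Polynomial.eval_mul, Polynomial.eval_add, Polynomial.eval_pow,
        Polynomial.eval_sub, hweval, pPoly_eval] using this
    have hνdec : -2*σ * (padeP a m y * padeA b n y) = (y - x₀)^j * μ.eval y := by
      have := congrArg (Polynomial.eval y) hfact
      simp only [Polynomial.eval_mul, Polynomial.eval_pow, Polynomial.eval_sub,
        Polynomial.eval_X, Polynomial.eval_C, hν, pPoly_eval, aPoly_eval] at this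
      linarith [this]
    have hgg1 : gg y * (1 - σ * padeA b n y) = S₀.eval y := by
      rw [hggdef]
      field_simp
    have hhh1 : hh y * ((1 - σ * padeA b n y) * (1 + σ * padeA b n y)) = μ.eval y := by
      rw [hhhdef]
      field_simp
    rw [abs_lt] at hy
    rcases lt_trichotomy y x₀ with hlt | heq | hgt
    · have hsign : σ * padeA b n y < 0 := by
        have := hLn y ⟨by linarith [hy.1], hlt⟩
        rwa [aPoly_eval] at this
      have habs : |padeA b n y| = -(σ * padeA b n y) := by
        rw [← abs_of_pos (show (0:ℝ) < -(σ * padeA b n y) from by linarith), abs_neg,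
          abs_mul, hσ1, one_mul]
      rw [if_neg (not_lt.mpr hlt.le)]
      rw [hρdef]
      unfold safePAU padeQ
      rw [habs]
      rw [show (1 + -(σ * padeA b n y)) = 1 - σ * padeA b n y from by ring]
      rw [div_eq_iff hd1ne]
      linear_combination hPdec - (y - x₀)^k * hgg1
    · rw [heq]
      rw [if_neg (lt_irrefl x₀)]
      rw [hρdef]
      unfold safePAU padeQ
      rw [hA0]
      have hPdec0 : padeP a m x₀ = T₀.eval x₀ := by
        have h := hPdec
        rw [heq] at h
        rw [h, hA0]
        ring
      simp [zero_pow (show k ≠ 0 by omega)]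
      linarith [hPdec0]
    · have hsign : 0 < σ * padeA b n y := by
        have := hRn y ⟨hgt, by linarith [hy.2]⟩
        rwa [aPoly_eval] at this
      have habs : |padeA b n y| = σ * padeA b n y := by
        rw [← abs_of_pos hsign, abs_mul, hσ1, one_mul]
      rw [if_pos hgt]
      rw [hρdef]
      unfold safePAU padeQ
      rw [habs]
      rw [div_eq_iff (show (1 + σ * padeA b n y) ≠ 0 from hd2ne)]
      -- multiply by the extra factor (1 - σ A) and cancel
      apply mul_right_cancel₀ hd1ne
      linear_combination (1 + σ * padeA b n y) * hPdec
        - ((y - x₀)^k * (1 + σ * padeA b n y)) * hgg1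
        - (y - x₀)^j * hhh1 + hνdec
  -- bound for gg on the closed interval
  have hggcont : ContinuousOn gg (Set.Icc (x₀ - δ₁) (x₀ + δ₁)) := by
    apply ContinuousOn.div (S₀.continuous.continuousOn)
      ((continuous_const.sub (continuous_const.mul (padeA_continuous b n))).continuousOn)
    intro y hy
    have : |y - x₀| ≤ δ₁ := by
      rw [abs_le]; exact ⟨by linarith [hy.1], by linarith [hy.2]⟩
    have := hden1 y this
    intro h0; simp only [Pi.sub_apply, Pi.mul_apply] at h0; linarith
  obtain ⟨Mg, hMg⟩ := (isCompact_Icc (a := x₀ - δ₁) (b := x₀ + δ₁)).exists_bound_of_continuousOn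
    hggcont
  have hMg0 : 0 ≤ Mg :=
    le_trans (norm_nonneg _) (hMg x₀ ⟨by linarith, by linarith⟩)
  -- continuity of hh at x₀
  have hhx₀ : hh x₀ = c₀ := by
    show μ.eval x₀ / ((1 - σ * padeA b n x₀) * (1 + σ * padeA b n x₀)) = c₀
    rw [hA0, hc₀def]
    norm_num
  have hhcont : ContinuousAt hh x₀ := by
    apply ContinuousAt.div (μ.continuous.continuousAt)
    · exact ((continuous_const.sub (continuous_const.mul (padeA_continuous b n))).mul
        (continuous_const.add (continuous_const.mul (padeA_continuous b n)))).continuousAt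
    · rw [hA0]
      norm_num
  -- main approximation
  apply PAUaux.NA.of_close
  intro R hR ε hε
  set B := R + (k:ℝ) + 1 with hBdef
  have hB : 0 < B := by rw [hBdef]; positivity
  have hB1 : 1 ≤ B := by
    rw [hBdef]
    have : (0:ℝ) ≤ (k:ℝ) := Nat.cast_nonneg k
    linarith
  set ε₁ := ε / (2 * (2^k * B^j) + 1) with hε₁def
  have hε₁ : 0 < ε₁ := by rw [hε₁def]; positivity
  obtain ⟨δ₂, hδ₂, hδ₂prop⟩ := Metric.continuousAt_iff.mp hhcont ε₁ hε₁
  set C2 := 2^k * B^k * (Mg + 1) with hC2def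
  have hC2 : 0 < C2 := by rw [hC2def]; positivity
  set lam := min (δ₁ / (2*B)) (min (δ₂ / (2*B)) (ε / (2*C2))) with hlamdef
  have hlam : 0 < lam := by
    apply lt_min (by positivity) (lt_min (by positivity) (by positivity))
  have hlamδ₁ : lam * B ≤ δ₁ / 2 := by
    have h1 : lam ≤ δ₁ / (2*B) := min_le_left _ _
    calc lam * B ≤ (δ₁ / (2*B)) * B := mul_le_mul_of_nonneg_right h1 hB.le
      _ = δ₁ / 2 := by
          have hBne : B ≠ 0 := ne_of_gt hB
          field_simp
  have hlamδ₂ : lam * B ≤ δ₂ / 2 := by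
    have h1 : lam ≤ δ₂ / (2*B) := le_trans (min_le_right _ _) (min_le_left _ _)
    calc lam * B ≤ (δ₂ / (2*B)) * B := mul_le_mul_of_nonneg_right h1 hB.le
      _ = δ₂ / 2 := by
          have hBne : B ≠ 0 := ne_of_gt hB
          field_simp
  have hlamC2 : lam ≤ ε / (2*C2) := le_trans (min_le_right _ _) (min_le_right _ _)
  -- the network function
  set φ : ℝ → ℝ := fun u => ρ (lam * u + x₀) with hφdef
  set g' : ℝ → ℝ := fun t => (1/lam^j) * fD^[k] φ t with hg'def
  have hNAg' : PAUaux.NA ρ g' := by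
    have h0 : PAUaux.NA ρ (fun u => ρ (lam * u + x₀)) := PAUaux.NA.base ρ lam x₀
    exact (h0.fD_iter k).smul (1/lam^j)
  refine ⟨g', hNAg', ?_⟩
  intro t ht
  -- the three pieces
  set q : Polynomial ℝ := T₀.comp (Polynomial.C lam * Polynomial.X + Polynomial.C x₀) with hq
  set ψT : ℝ → ℝ := fun u => q.eval u with hψT
  set ψg : ℝ → ℝ := fun u => (lam * u)^k * gg (lam * u + x₀) with hψg
  set ψh : ℝ → ℝ := fun u => if (0:ℝ) < u then (lam*u)^j * hh (lam*u + x₀) else 0 with hψh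
  have hargsmall : ∀ u : ℝ, |u| ≤ R + (k:ℝ) → |(lam * u + x₀) - x₀| ≤ lam * B := by
    intro u hu
    rw [add_sub_cancel_right, abs_mul, abs_of_pos hlam]
    apply mul_le_mul_of_nonneg_left _ hlam.le
    rw [hBdef]; linarith
  have hdecompφ : ∀ u : ℝ, |u| ≤ R + (k:ℝ) → φ u = ψT u + (ψg u + ψh u) := by
    intro u hu
    have harg : |(lam * u + x₀) - x₀| < δ₁ := by
      calc |(lam * u + x₀) - x₀| ≤ lam * B := hargsmall u hu
        _ ≤ δ₁ / 2 := hlamδ₁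
        _ < δ₁ := by linarith
    have hk2 := hkey (lam * u + x₀) harg
    rw [hφdef]
    simp only
    rw [hk2]
    have hqe : ψT u = T₀.eval (lam * u + x₀) := by
      show (T₀.comp (Polynomial.C lam * Polynomial.X + Polynomial.C x₀)).eval u
          = T₀.eval (lam * u + x₀)
      rw [Polynomial.eval_comp]
      simp
    have hsub : (lam * u + x₀) - x₀ = lam * u := by ring
    rw [hsub]
    have hif : (if x₀ < lam * u + x₀ then (lam*u)^j * hh (lam*u + x₀) else 0) = ψh u := by
      have h0 : ψh u = if (0:ℝ) < u then (lam*u)^j * hh (lam*u + x₀) else 0 := rfl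
      rw [h0]
      by_cases hcase : (0:ℝ) < u
      · rw [if_pos hcase, if_pos (by have := mul_pos hlam hcase; linarith)]
      · rw [if_neg hcase, if_neg (by
          push_neg at hcase ⊢
          have := mul_nonpos_of_nonneg_of_nonpos hlam.le hcase
          linarith)]
    rw [hif, ← hqe]
    have h1 : ψg u = (lam * u)^k * gg (lam * u + x₀) := rfl
    rw [h1]
    ring
  -- q has degree < k
  have hqdeg : q.degree < ((k:ℕ) : WithBot ℕ) := by
    rw [hq]
    by_cases hT₀0 : T₀ = 0
    · rw [hT₀0, Polynomial.zero_comp, Polynomial.degree_zero]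
      exact WithBot.bot_lt_coe k
    · have hnd : (T₀.comp (Polynomial.C lam * Polynomial.X + Polynomial.C x₀)).natDegree
          = T₀.natDegree := by
        rw [Polynomial.natDegree_comp, Polynomial.natDegree_linear (ne_of_gt hlam), mul_one]
      calc (T₀.comp (Polynomial.C lam * Polynomial.X + Polynomial.C x₀)).degree
          ≤ ((T₀.comp (Polynomial.C lam * Polynomial.X + Polynomial.C x₀)).natDegree : WithBot ℕ) :=
            Polynomial.degree_le_natDegree
        _ = (T₀.natDegree : WithBot ℕ) := by rw [hnd]
        _ = T₀.degree := (Polynomial.degree_eq_natDegree hT₀0).symm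
        _ < ((k:ℕ) : WithBot ℕ) := hT₀deg
  have hET : fD^[k] ψT t = 0 := PAUaux.fD_iter_poly k q hqdeg t
  -- bounds on [t, t+k]
  have htk : ∀ u : ℝ, t ≤ u → u ≤ t + (k:ℝ) → |u| ≤ R + (k:ℝ) := by
    intro u hu1 hu2
    rw [abs_le] at ht ⊢
    constructor
    · have : (0:ℝ) ≤ (k:ℝ) := Nat.cast_nonneg k
      linarith [ht.1]
    · linarith [ht.2]
  have hEg : |fD^[k] ψg t| ≤ 2^k * (lam^k * B^k * Mg) := by
    apply PAUaux.fD_iter_abs_le (by positivity)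
    intro u hu1 hu2
    have hu := htk u hu1 hu2
    rw [hψg]
    have harg : |(lam * u + x₀) - x₀| ≤ δ₁ := by
      calc |(lam * u + x₀) - x₀| ≤ lam * B := hargsmall u hu
        _ ≤ δ₁ / 2 := hlamδ₁
        _ ≤ δ₁ := by linarith
    have hmem : lam * u + x₀ ∈ Set.Icc (x₀ - δ₁) (x₀ + δ₁) := by
      rw [abs_le] at harg
      exact ⟨by linarith [harg.1], by linarith [harg.2]⟩
    have hggb : |gg (lam * u + x₀)| ≤ Mg := by
      have := hMg _ hmem
      rwa [Real.norm_eq_abs] at this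
    calc |(lam * u)^k * gg (lam * u + x₀)| = |lam * u|^k * |gg (lam * u + x₀)| := by
          rw [abs_mul, abs_pow]
      _ ≤ (lam * B)^k * Mg := by
          apply mul_le_mul _ hggb (abs_nonneg _) (by positivity)
          apply pow_le_pow_left₀ (abs_nonneg _)
          rw [abs_mul, abs_of_pos hlam]
          apply mul_le_mul_of_nonneg_left _ hlam.le
          rw [hBdef]
          rw [abs_le] at hu ⊢
          constructor <;> linarith [hu.1, hu.2]
      _ = lam^k * B^k * Mg := by rw [mul_pow]
  have hEh : |fD^[k] ψh t - lam^j * c₀ * PAUaux.Hf k j t| ≤ 2^k * (lam^j * B^j * ε₁) := by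
    have hsm : fD^[k] (fun u => (lam^j * c₀) * PAUaux.rp j u) t
        = lam^j * c₀ * PAUaux.Hf k j t := by
      rw [PAUaux.fD_iter_smul]
      rfl
    have hdiff : fD^[k] ψh t - lam^j * c₀ * PAUaux.Hf k j t
        = fD^[k] (fun u => ψh u + (-1) * ((lam^j * c₀) * PAUaux.rp j u)) t := by
      rw [PAUaux.fD_iter_add, PAUaux.fD_iter_smul, hsm]
      ring
    rw [hdiff]
    apply PAUaux.fD_iter_abs_le (by positivity)
    intro u hu1 hu2
    have hu := htk u hu1 hu2
    by_cases hcase : (0:ℝ) < u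
    · have hψhu : ψh u = (lam*u)^j * hh (lam*u + x₀) := by
        show (if (0:ℝ) < u then (lam*u)^j * hh (lam*u + x₀) else 0) = _
        rw [if_pos hcase]
      have hrp : PAUaux.rp j u = u^j := by
        unfold PAUaux.rp
        rw [max_eq_left hcase.le]
      have hargδ₂ : dist (lam * u + x₀) x₀ < δ₂ := by
        rw [Real.dist_eq]
        calc |(lam * u + x₀) - x₀| ≤ lam * B := hargsmall u hu
          _ ≤ δ₂ / 2 := hlamδ₂
          _ < δ₂ := by linarith
      have hhb : |hh (lam*u + x₀) - c₀| ≤ ε₁ := by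
        have := hδ₂prop hargδ₂
        rw [Real.dist_eq, hhx₀] at this
        exact this.le
      have : ψh u + (-1) * ((lam^j * c₀) * PAUaux.rp j u)
          = lam^j * u^j * (hh (lam*u + x₀) - c₀) := by
        rw [hψhu, hrp, mul_pow]
        ring
      rw [this]
      calc |lam^j * u^j * (hh (lam*u + x₀) - c₀)|
          = lam^j * |u|^j * |hh (lam*u + x₀) - c₀| := by
            rw [abs_mul, abs_mul, abs_pow, abs_pow, abs_of_pos hlam]
        _ ≤ lam^j * B^j * ε₁ := by
            apply mul_le_mul _ hhb (abs_nonneg _) (by positivity)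
            apply mul_le_mul_of_nonneg_left _ (by positivity)
            apply pow_le_pow_left₀ (abs_nonneg _)
            rw [abs_le] at hu ⊢
            rw [hBdef]
            constructor <;> linarith [hu.1, hu.2]
    · have hψhu : ψh u = 0 := by
        show (if (0:ℝ) < u then (lam*u)^j * hh (lam*u + x₀) else 0) = 0
        rw [if_neg hcase]
      have hrp : PAUaux.rp j u = 0 := by
        unfold PAUaux.rp
        push_neg at hcase
        rw [max_eq_right hcase]
        exact zero_pow (by omega)
      rw [hψhu, hrp]
      simp
      positivity
  -- put everything together
  have hφeq : fD^[k] φ t = fD^[k] ψT t + (fD^[k] ψg t + fD^[k] ψh t) := by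
    have h1 : fD^[k] φ t = fD^[k] (fun u => ψT u + (ψg u + ψh u)) t := by
      apply PAUaux.fD_iter_congr
      intro u hu1 hu2
      exact hdecompφ u (htk u hu1 hu2)
    rw [h1, PAUaux.fD_iter_add]
    congr 1
    rw [PAUaux.fD_iter_add]
  have hlamj : lam^j ≠ 0 := by positivity
  have hfinal : |c₀ * PAUaux.Hf k j t - g' t|
      ≤ (1/lam^j) * (2^k * (lam^k * B^k * Mg)) + (1/lam^j) * (2^k * (lam^j * B^j * ε₁)) := by
    rw [hg'def]
    simp only
    rw [hφeq, hET]
    have : c₀ * PAUaux.Hf k j t - 1/lam^j * (0 + (fD^[k] ψg t + fD^[k] ψh t))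
        = -(1/lam^j * fD^[k] ψg t) - (1/lam^j) * (fD^[k] ψh t - lam^j * c₀ * PAUaux.Hf k j t) := by
      field_simp
      ring
    rw [this]
    calc |(-(1/lam^j * fD^[k] ψg t)) - (1/lam^j) * (fD^[k] ψh t - lam^j * c₀ * PAUaux.Hf k j t)|
        ≤ |(-(1/lam^j * fD^[k] ψg t))| + |(1/lam^j) * (fD^[k] ψh t - lam^j * c₀ * PAUaux.Hf k j t)| :=
          abs_sub _ _
      _ ≤ (1/lam^j) * (2^k * (lam^k * B^k * Mg)) + (1/lam^j) * (2^k * (lam^j * B^j * ε₁)) := by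
          apply add_le_add
          · rw [abs_neg, abs_mul, abs_of_pos (by positivity : (0:ℝ) < 1/lam^j)]
            exact mul_le_mul_of_nonneg_left hEg (by positivity)
          · rw [abs_mul, abs_of_pos (by positivity : (0:ℝ) < 1/lam^j)]
            exact mul_le_mul_of_nonneg_left hEh (by positivity)
  calc |c₀ * PAUaux.Hf k j t - g' t|
      ≤ (1/lam^j) * (2^k * (lam^k * B^k * Mg)) + (1/lam^j) * (2^k * (lam^j * B^j * ε₁)) := hfinal
    _ = lam * (2^k * B^k * Mg) + 2^k * B^j * ε₁ := by
        rw [hkdef]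
        field_simp
        ring
    _ ≤ ε/2 + ε/2 := by
        apply add_le_add
        · have h1 : lam * (2^k * B^k * Mg) ≤ lam * C2 := by
            apply mul_le_mul_of_nonneg_left _ hlam.le
            rw [hC2def]
            nlinarith [hMg0, (by positivity : (0:ℝ) < 2^k * B^k)]
          have h2 : lam * C2 ≤ (ε / (2*C2)) * C2 := mul_le_mul_of_nonneg_right hlamC2 hC2.le
          have h3 : (ε / (2*C2)) * C2 = ε/2 := by field_simp
          linarith
        · have hpos : (0:ℝ) < 2^k * B^j := by positivity
          have hD : (0:ℝ) < 2*(2^k*B^j)+1 := by positivity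
          rw [hε₁def]
          have heq : 2^k*B^j*(ε/(2*(2^k*B^j)+1)) = ε * ((2^k*B^j)/(2*(2^k*B^j)+1)) := by
            ring
          rw [heq]
          have hfrac : (2^k*B^j)/(2*(2^k*B^j)+1) ≤ 1/2 := by
            rw [div_le_div_iff₀ hD (by norm_num)]
            linarith [hpos]
          calc ε * ((2^k*B^j)/(2*(2^k*B^j)+1)) ≤ ε * (1/2) :=
                mul_le_mul_of_nonneg_left hfrac hε.le
            _ = ε/2 := by ring
    _ = ε := by ring

/-- The 1-D exponential result. -/
lemma NA_exp (m n : ℕ) (a b : ℕ → ℝ)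
    (hP : ∃ x : ℝ, padeP a m x ≠ 0)
    (x₁ x₂ : ℝ) (h₁ : 0 < padeA b n x₁) (h₂ : padeA b n x₂ < 0) :
    ∃ α : ℝ, α ≠ 0 ∧ PAUaux.NA (safePAU a b m n) (fun t => Real.exp (α * t)) := by
  obtain ⟨k, j, c₀, hj1, hjk, hc₀, hNA⟩ := NA_spline m n a b hP x₁ x₂ h₁ h₂
  have hk : 1 ≤ k := le_trans hj1 hjk.le
  set H : ℝ → ℝ := fun t => c₀ * PAUaux.Hf k j t with hH
  have hHc : Continuous H := continuous_const.mul (PAUaux.Hf_continuous k j)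
  have hs0 : ∀ t : ℝ, 0 ≤ t → H t = 0 := by
    intro t ht
    rw [hH]
    simp only
    rw [PAUaux.Hf_zero_of_nonneg k j hjk t ht, mul_zero]
  have hsk : ∀ t : ℝ, t ≤ -(k:ℝ) → H t = 0 := by
    intro t ht
    rw [hH]
    simp only
    rw [PAUaux.Hf_zero_of_le k j hj1 t ht, mul_zero]
  have hv : H (-(1/2)) ≠ 0 := by
    rw [hH]
    simp only
    rw [PAUaux.Hf_half k j hj1 hjk]
    apply mul_ne_zero hc₀
    apply mul_ne_zero
    · exact pow_ne_zero _ (by norm_num)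
    · exact pow_ne_zero _ (by norm_num)
  exact PAUaux.NA_exp_of_H _ k hk H hHc hs0 hsk hv hNA

open scoped RealInnerProductSpace


set_option maxHeartbeats 1000000 in
set_option synthInstance.maxHeartbeats 1000000 in
theorem safePAU_networks_dense (m n : ℕ) (a b : ℕ → ℝ)
    (hP : ∃ x : ℝ, padeP a m x ≠ 0)
    (x₁ x₂ : ℝ) (h₁ : 0 < padeA b n x₁) (h₂ : padeA b n x₂ < 0)
    (d : ℕ) (K : Set (EuclideanSpace ℝ (Fin d))) (hK : IsCompact K)
    (hKinf : K.Infinite) :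
    ∀ f : EuclideanSpace ℝ (Fin d) → ℝ, ContinuousOn f K → ∀ ε > 0,
      ∃ (N : ℕ) (c θ : Fin N → ℝ) (w : Fin N → EuclideanSpace ℝ (Fin d)),
        ∀ x ∈ K, |f x - ∑ i, c i * safePAU a b m n (⟪w i, x⟫ + θ i)| < ε := by
  classical
  intro f hf ε hε
  obtain ⟨α, hα, hNAexp⟩ := NA_exp m n a b hP x₁ x₂ h₁ h₂
  set ρ := safePAU a b m n with hρ
  have hρc : Continuous ρ := safePAU_continuous a b m n
  haveI : CompactSpace K := isCompact_iff_compactSpace.mp hK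
  haveI : Nonempty K := hKinf.nonempty.to_subtype
  obtain ⟨CK, hCK⟩ := (Bornology.IsBounded.exists_norm_le (hK.isBounded))
  have hCK0 : 0 ≤ CK := by
    obtain ⟨x0⟩ := (inferInstance : Nonempty K)
    exact le_trans (norm_nonneg _) (hCK _ x0.2)
  -- the dictionary and its span
  set Dict : Set C(K, ℝ) :=
    {g | ∃ (w : EuclideanSpace ℝ (Fin d)) (θ : ℝ), ∀ x : K, g x = ρ (⟪w, (x : EuclideanSpace ℝ (Fin d))⟫ + θ)} with hDict
  set V : Submodule ℝ C(K, ℝ) := Submodule.span ℝ Dict with hV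
  -- the exponentials
  set expc : EuclideanSpace ℝ (Fin d) → C(K, ℝ) := fun w =>
    ⟨fun x => Real.exp ⟪w, (x : EuclideanSpace ℝ (Fin d))⟫,
      Real.continuous_exp.comp (Continuous.inner continuous_const continuous_subtype_val)⟩
    with hexpc
  have hexpmem : ∀ w : EuclideanSpace ℝ (Fin d), expc w ∈ V.topologicalClosure := by
    intro w
    rw [← SetLike.mem_coe, Submodule.topologicalClosure_coe]
    rw [Metric.mem_closure_iff]
    intro ε' hε'
    set v : EuclideanSpace ℝ (Fin d) := α⁻¹ • w with hv
    set R := ‖v‖ * CK + 1 with hR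
    have hRpos : 0 < R := by
      have : 0 ≤ ‖v‖ * CK := mul_nonneg (norm_nonneg v) hCK0
      rw [hR]; linarith
    obtain ⟨N, c, l, θ, hnet⟩ := hNAexp R hRpos (ε'/2) (by positivity)
    set gfun : C(K, ℝ) := ∑ i : Fin N, c i •
      (⟨fun x => ρ (⟪l i • v, (x : EuclideanSpace ℝ (Fin d))⟫ + θ i),
        hρc.comp ((Continuous.inner continuous_const continuous_subtype_val).add
          continuous_const)⟩ : C(K, ℝ)) with hgfun
    refine ⟨gfun, ?_, ?_⟩
    · apply Submodule.sum_mem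
      intro i _
      apply Submodule.smul_mem
      apply Submodule.subset_span
      exact ⟨l i • v, θ i, fun x => rfl⟩
    · rw [ContinuousMap.dist_lt_iff hε']
      intro x
      have hx : |⟪v, (x : EuclideanSpace ℝ (Fin d))⟫| ≤ R := by
        calc |⟪v, (x : EuclideanSpace ℝ (Fin d))⟫| ≤ ‖v‖ * ‖(x : EuclideanSpace ℝ (Fin d))‖ := abs_real_inner_le_norm _ _
          _ ≤ ‖v‖ * CK := mul_le_mul_of_nonneg_left (hCK _ x.2) (norm_nonneg v)
          _ ≤ R := by rw [hR]; linarith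
      have hnetx := hnet ⟪v, (x : EuclideanSpace ℝ (Fin d))⟫ hx
      have hwx : ⟪w, (x : EuclideanSpace ℝ (Fin d))⟫ = α * ⟪v, (x : EuclideanSpace ℝ (Fin d))⟫ := by
        rw [hv, real_inner_smul_left]
        field_simp
      have hgx : gfun x = ∑ i : Fin N, c i * ρ (l i * ⟪v, (x : EuclideanSpace ℝ (Fin d))⟫ + θ i) := by
        rw [hgfun]
        rw [ContinuousMap.sum_apply]
        congr 1
        funext i
        rw [ContinuousMap.smul_apply]
        rw [smul_eq_mul]
        congr 1
        show ρ (⟪l i • v, (x : EuclideanSpace ℝ (Fin d))⟫ + θ i) = ρ (l i * ⟪v, (x : EuclideanSpace ℝ (Fin d))⟫ + θ i)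
        rw [real_inner_smul_left]
      have hex : expc w x = Real.exp (α * ⟪v, (x : EuclideanSpace ℝ (Fin d))⟫) := by
        show Real.exp ⟪w, (x : EuclideanSpace ℝ (Fin d))⟫ = _
        rw [hwx]
      rw [Real.dist_eq, hex, hgx]
      calc |Real.exp (α * ⟪v, (x : EuclideanSpace ℝ (Fin d))⟫) - ∑ i : Fin N, c i * ρ (l i * ⟪v, (x : EuclideanSpace ℝ (Fin d))⟫ + θ i)|
          ≤ ε'/2 := hnetx
        _ < ε' := by linarith
  -- the subalgebra generated by exponentials
  set SA := Algebra.adjoin ℝ (Set.range expc) with hSA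
  have hone : (1 : C(K, ℝ)) ∈ Set.range expc := by
    refine ⟨0, ?_⟩
    ext x
    show Real.exp ⟪(0 : EuclideanSpace ℝ (Fin d)), (x : EuclideanSpace ℝ (Fin d))⟫ = 1
    rw [inner_zero_left, Real.exp_zero]
  have hmul : ∀ g₁ g₂ : C(K, ℝ), g₁ ∈ Set.range expc → g₂ ∈ Set.range expc →
      g₁ * g₂ ∈ Set.range expc := by
    rintro g₁ g₂ ⟨w₁, rfl⟩ ⟨w₂, rfl⟩
    refine ⟨w₁ + w₂, ?_⟩
    ext x
    show Real.exp ⟪w₁ + w₂, (x : EuclideanSpace ℝ (Fin d))⟫ = Real.exp ⟪w₁, (x : EuclideanSpace ℝ (Fin d))⟫ * Real.exp ⟪w₂, (x : EuclideanSpace ℝ (Fin d))⟫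
    rw [inner_add_left, Real.exp_add]
  have hsep : SA.SeparatesPoints := by
    intro x y hxy
    have hvne : (x : EuclideanSpace ℝ (Fin d)) ≠ (y : EuclideanSpace ℝ (Fin d)) := fun h => hxy (Subtype.ext h)
    refine ⟨expc ((x : EuclideanSpace ℝ (Fin d)) - (y : EuclideanSpace ℝ (Fin d))),
      ⟨expc ((x : EuclideanSpace ℝ (Fin d)) - (y : EuclideanSpace ℝ (Fin d))), Algebra.subset_adjoin ⟨_, rfl⟩, rfl⟩, ?_⟩
    show Real.exp ⟪(x : EuclideanSpace ℝ (Fin d)) - (y : EuclideanSpace ℝ (Fin d)), (x : EuclideanSpace ℝ (Fin d))⟫ ≠ Real.exp ⟪(x : EuclideanSpace ℝ (Fin d)) - (y : EuclideanSpace ℝ (Fin d)), (y : EuclideanSpace ℝ (Fin d))⟫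
    intro h
    have h2 := Real.exp_injective h
    apply hvne
    have h3 : ⟪(x : EuclideanSpace ℝ (Fin d)) - (y : EuclideanSpace ℝ (Fin d)), (x : EuclideanSpace ℝ (Fin d)) - (y : EuclideanSpace ℝ (Fin d))⟫ = 0 := by
      rw [inner_sub_right, h2]
      ring
    rw [inner_self_eq_zero] at h3
    exact sub_eq_zero.mp h3
  have htop := ContinuousMap.subalgebra_topologicalClosure_eq_top_of_separatesPoints SA hsep
  -- SA sits inside the closure of V
  have hmono : (SA : Set C(K, ℝ)) ⊆ (V.topologicalClosure : Set C(K, ℝ)) := by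
    intro g hg
    have hmem : g ∈ Subalgebra.toSubmodule SA := hg
    rw [hSA, Algebra.adjoin_eq_span] at hmem
    set MM : Submonoid C(K, ℝ) :=
      { carrier := Set.range expc
        one_mem' := hone
        mul_mem' := fun hf hg => hmul _ _ hf hg } with hMM
    have hset : ((Submonoid.closure (Set.range expc)) : Set C(K, ℝ)) = Set.range expc := by
      rw [show (Set.range expc) = (MM : Set C(K, ℝ)) from rfl, Submonoid.closure_eq]
    rw [hset] at hmem
    have hspanle : Submodule.span ℝ (Set.range expc) ≤ V.topologicalClosure := by
      rw [Submodule.span_le]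
      rintro g' ⟨w, rfl⟩
      exact hexpmem w
    exact hspanle hmem
  have hVtop : ∀ g : C(K, ℝ), g ∈ V.topologicalClosure := by
    intro g
    have h1 : g ∈ closure (SA : Set C(K, ℝ)) := by
      have hcoe : (SA.topologicalClosure : Set C(K, ℝ)) = closure (SA : Set C(K, ℝ)) :=
        Subalgebra.topologicalClosure_coe SA
      rw [← hcoe, htop]
      trivial
    have h3 := closure_mono hmono h1
    have h4 : closure (V.topologicalClosure : Set C(K, ℝ)) = (V.topologicalClosure : Set C(K, ℝ)) :=
      IsClosed.closure_eq (Submodule.isClosed_topologicalClosure V)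
    rw [h4] at h3
    exact h3
  -- conclude
  set fc : C(K, ℝ) := ⟨K.restrict f, hf.restrict⟩ with hfc
  have hfcV := hVtop fc
  rw [← SetLike.mem_coe, Submodule.topologicalClosure_coe, Metric.mem_closure_iff] at hfcV
  obtain ⟨g, hgV, hgdist⟩ := hfcV (ε/2) (by positivity)
  rw [hV] at hgV
  obtain ⟨NN, cc, vv, hsum⟩ := Submodule.mem_span_set'.mp hgV
  choose wfun θfun hvv using fun i => (vv i).2
  refine ⟨NN, cc, θfun, wfun, ?_⟩
  intro x hx
  have hgx : g ⟨x, hx⟩ = ∑ i : Fin NN, cc i * ρ (⟪wfun i, x⟫ + θfun i) := by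
    rw [← hsum, ContinuousMap.sum_apply]
    congr 1
    funext i
    rw [ContinuousMap.smul_apply, smul_eq_mul]
    congr 1
    exact hvv i ⟨x, hx⟩
  have hdist : |f x - g ⟨x, hx⟩| ≤ dist fc g := by
    have := ContinuousMap.dist_apply_le_dist (f := fc) (g := g) ⟨x, hx⟩
    rwa [Real.dist_eq] at this
  calc |f x - ∑ i : Fin NN, cc i * safePAU a b m n (⟪wfun i, x⟫ + θfun i)|
      = |f x - g ⟨x, hx⟩| := by rw [hgx]
    _ ≤ dist fc g := hdist
    _ < ε/2 := hgdist
    _ < ε := by linarith
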